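/- arXiv:2405.08232 — 7 statements merged into one kernel-verified Lean document; each statement's English description precedes it below -/
import Mathlib

section
/- For x, y ∈ ℝ^T with equal coordinate sums, if every partial sum of the sorted-decreasing rearrangement of x is bounded by the corresponding partial sum of the sorted-decreasing rearrangement of y, then the permutahedron Π(x) = ConvexHull{x^π : π ∈ S_T} is contained in Π(y); conversely Π(x) ⊆ Π(y) implies x is majorized by y. -/
open Finset

/-- Fastest-charging profile: `m` for the first `⌊e/m⌋` coordinates,
`e - m⌊e/m⌋` in the next, `0` thereafter (0-based indexing). -/
noncomputable def vProf (T : ℕ) (m e : ℝ) : Fin T → ℝ :=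
  fun t => if ((t : ℕ) : ℤ) < ⌊e / m⌋ then m
    else if ((t : ℕ) : ℤ) = ⌊e / m⌋ then e - m * (⌊e / m⌋ : ℝ)
    else 0

/-- Partial sum of the first `s` coordinates of `x : Fin T → ℝ`. -/
noncomputable def pSum {T : ℕ} (x : Fin T → ℝ) (s : ℕ) : ℝ :=
  ∑ t : Fin T, if (t : ℕ) < s then x t else 0

/-- Permutahedron of `x`: convex hull of all coordinate permutations of `x`. -/
noncomputable def permSet {T : ℕ} (x : Fin T → ℝ) : Set (Fin T → ℝ) :=
  convexHull ℝ {y | ∃ π : Equiv.Perm (Fin T), y = x ∘ π}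

namespace MajAux

variable {T : ℕ}

/-- Extension of a `Fin T`-vector to `ℕ` by zero. -/
noncomputable def extN (x : Fin T → ℝ) : ℕ → ℝ :=
  fun i => if h : i < T then x ⟨i, h⟩ else 0

lemma pSum_eq (x : Fin T → ℝ) {s : ℕ} (hs : s ≤ T) :
    pSum x s = ∑ i ∈ range s, extN x i := by
  have h1 : pSum x s = ∑ i ∈ range T, (if i < s then extN x i else 0) := by
    rw [pSum, ← Fin.sum_univ_eq_sum_range]
    refine Finset.sum_congr rfl fun t _ => ?_
    simp [extN, t.isLt]
  rw [h1]
  rw [← Finset.sum_filter]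
  refine Finset.sum_congr ?_ fun _ _ => rfl
  ext i
  simp only [mem_filter, mem_range]
  omega

lemma pSum_top (x : Fin T → ℝ) : pSum x T = ∑ t, x t := by
  simp [pSum, Fin.is_lt]

lemma pSum_filter (x : Fin T → ℝ) (s : ℕ) :
    pSum x s = ∑ t ∈ univ.filter (fun t : Fin T => (t : ℕ) < s), x t := by
  rw [pSum, ← Finset.sum_filter]

lemma strictMono_le_apply {s : ℕ} {f : Fin s → ℕ} (hf : StrictMono f) (i : Fin s) :
    (i : ℕ) ≤ f i := by
  obtain ⟨iv, hiv⟩ := i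
  induction iv with
  | zero => exact Nat.zero_le _
  | succ n ih =>
    have hn : n < s := Nat.lt_of_succ_lt hiv
    have h1 : (⟨n, hn⟩ : Fin s) < ⟨n + 1, hiv⟩ := by simp [Fin.lt_def]
    have h2 := hf h1
    have h3 := ih hn
    simp only [Fin.val_mk] at h2 h3 ⊢
    omega

/-- Sum over any finset is at most the corresponding top partial sum, for antitone vectors. -/
lemma sum_finset_le {b : Fin T → ℝ} (hb : Antitone b) (A : Finset (Fin T)) :
    ∑ i ∈ A, b i ≤ pSum b A.card := by
  have hsT : A.card ≤ T := by
    simpa using Finset.card_le_card (Finset.subset_univ A)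
  set s := A.card with hs
  let e : Fin s ↪o Fin T := A.orderEmbOfFin hs.symm
  have hmem : ∀ i : Fin s, e i ∈ A := fun i => A.orderEmbOfFin_mem hs.symm i
  have hA : A = Finset.image (fun i : Fin s => e i) Finset.univ := by
    apply Finset.coe_injective
    rw [Finset.coe_image, Finset.coe_univ, Set.image_univ]
    exact (A.range_orderEmbOfFin hs.symm).symm
  have hinj : Function.Injective (fun i : Fin s => e i) := e.injective
  have h1 : ∑ i ∈ A, b i = ∑ i : Fin s, b (e i) := by
    rw [hA, Finset.sum_image (fun i _ j _ h => hinj h)]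
  have h2 : pSum b s = ∑ i : Fin s, b ⟨(i : ℕ), lt_of_lt_of_le i.isLt hsT⟩ := by
    rw [pSum_eq b hsT, ← Fin.sum_univ_eq_sum_range]
    refine Finset.sum_congr rfl fun i _ => ?_
    simp [extN, lt_of_lt_of_le i.isLt hsT]
  rw [h1, h2]
  refine Finset.sum_le_sum fun i _ => ?_
  refine hb ?_
  have hsm : StrictMono (fun i : Fin s => ((e i : Fin T) : ℕ)) :=
    fun i j hij => by exact_mod_cast e.strictMono hij
  have := strictMono_le_apply hsm i
  exact Fin.mk_le_of_le_val this

lemma card_filter_lt {s : ℕ} (hs : s ≤ T) :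
    (univ.filter (fun t : Fin T => (t : ℕ) < s)).card = s := by
  have : univ.filter (fun t : Fin T => (t : ℕ) < s)
      = (univ : Finset (Fin s)).map (Fin.castLEEmb hs) := by
    ext a
    simp only [mem_filter, mem_univ, true_and, Finset.mem_map, Fin.castLEEmb]
    constructor
    · intro h
      exact ⟨⟨(a : ℕ), h⟩, by ext; simp⟩
    · rintro ⟨i, hi⟩
      have : a = Fin.castLE hs i := by simpa using hi.symm
      subst this
      simpa using i.isLt
  rw [this, Finset.card_map, Finset.card_univ, Fintype.card_fin]

/-- Permuted partial sums are dominated by sorted partial sums. -/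
lemma perm_psum_le {b : Fin T → ℝ} (hb : Antitone b) (ψ : Equiv.Perm (Fin T))
    {s : ℕ} (hs : s ≤ T) : pSum (b ∘ ψ) s ≤ pSum b s := by
  set A := (univ.filter (fun t : Fin T => (t : ℕ) < s)).image ψ with hA
  have h1 : pSum (b ∘ ψ) s = ∑ u ∈ A, b u := by
    rw [pSum_filter, hA, Finset.sum_image (fun i _ j _ h => ψ.injective h)]
    rfl
  have h2 : A.card = s := by
    rw [hA, Finset.card_image_of_injective _ ψ.injective, card_filter_lt hs]
  rw [h1, ← h2]
  exact sum_finset_le hb A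

/-- Abel summation comparison. -/
lemma abel_le {c a b : Fin T → ℝ} (hc : Antitone c)
    (hab : ∀ s ≤ T, pSum a s ≤ pSum b s) (htot : pSum a T = pSum b T) :
    ∑ i, c i * a i ≤ ∑ i, c i * b i := by
  set g : ℕ → ℝ := fun i => extN a i - extN b i with hg
  have key : ∑ i ∈ range T, extN c i * g i ≤ 0 := by
    have habel := Finset.sum_range_by_parts (extN c) g T
    simp only [smul_eq_mul] at habel
    have hGT : ∑ j ∈ range T, g j = 0 := by
      have := htot
      rw [pSum_eq a le_rfl, pSum_eq b le_rfl] at this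
      simp [hg, Finset.sum_sub_distrib, this]
    have hterm : ∀ i ∈ range (T - 1),
        0 ≤ (extN c (i + 1) - extN c i) * ∑ j ∈ range (i + 1), g j := by
      intro i hi
      rw [mem_range] at hi
      have hi1 : i + 1 < T := by omega
      have hc' : extN c (i + 1) - extN c i ≤ 0 := by
        have : c ⟨i + 1, hi1⟩ ≤ c ⟨i, by omega⟩ := hc (by simp [Fin.le_def])
        simp only [extN, dif_pos hi1, dif_pos (show i < T by omega)]
        linarith
      have hG : ∑ j ∈ range (i + 1), g j ≤ 0 := by
        have := hab (i + 1) (by omega)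
        rw [pSum_eq a (by omega), pSum_eq b (by omega)] at this
        simp [hg, Finset.sum_sub_distrib]
        linarith
      nlinarith [hc', hG]
    rw [habel, hGT, mul_zero, zero_sub, neg_nonpos]
    exact Finset.sum_nonneg hterm
  have hrw : ∑ i, c i * a i - ∑ i, c i * b i = ∑ i ∈ range T, extN c i * g i := by
    rw [← Finset.sum_sub_distrib, ← Fin.sum_univ_eq_sum_range]
    refine Finset.sum_congr rfl fun t _ => ?_
    simp [hg, extN, t.isLt]
    ring
  linarith [key, hrw]

/-- Rearrangement: `∑ c i * w (φ i)` is at most the similarly-sorted product. -/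
lemma inner_le_sorted {c w : Fin T → ℝ} {ρ : Equiv.Perm (Fin T)}
    (hcρ : Antitone (c ∘ ρ)) (hw : Antitone w) (φ : Equiv.Perm (Fin T)) :
    ∑ i, c i * w (φ i) ≤ ∑ i, (c ∘ ρ) i * w i := by
  have h1 : ∑ i, c i * w (φ i) = ∑ i, (c ∘ ρ) i * w ((φ * ρ) i) := by
    rw [← Equiv.sum_comp ρ (fun i => c i * w (φ i))]
    rfl
  rw [h1]
  have hmono : Monovary (c ∘ ρ) w := hcρ.monovary hw
  have := hmono.sum_smul_comp_perm_le_sum_smul (σ := φ * ρ)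
  simpa [smul_eq_mul] using this

lemma linear_psum (σ : Equiv.Perm (Fin T)) (s : ℕ) :
    IsLinearMap ℝ (fun z : Fin T → ℝ => pSum (z ∘ σ) s) := by
  constructor
  · intro z1 z2
    simp only [pSum_filter]
    rw [← Finset.sum_add_distrib]
    rfl
  · intro r z
    simp only [pSum_filter, Function.comp_apply, Pi.smul_apply, smul_eq_mul, Finset.mul_sum]

lemma permSet_finite (y : Fin T → ℝ) :
    ({z | ∃ π : Equiv.Perm (Fin T), z = y ∘ π} : Set (Fin T → ℝ)).Finite := by
  have : ({z | ∃ π : Equiv.Perm (Fin T), z = y ∘ π} : Set (Fin T → ℝ))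
      = Set.range (fun π : Equiv.Perm (Fin T) => y ∘ π) := by
    ext z; simp [Set.range, eq_comm]
  rw [this]
  exact Set.finite_range _

/-- Core separation argument: majorization implies membership in the permutahedron. -/
lemma mem_permSet_of_major {x y : Fin T → ℝ} (σ τ : Equiv.Perm (Fin T))
    (hx : Antitone (x ∘ σ)) (hy : Antitone (y ∘ τ))
    (hsum : ∑ t, x t = ∑ t, y t)
    (hmaj : ∀ s ≤ T, pSum (x ∘ σ) s ≤ pSum (y ∘ τ) s) :
    x ∈ permSet y := by
  by_contra hmem
  obtain ⟨f, u, hfu, hux⟩ := geometric_hahn_banach_closed_point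
    (convex_convexHull ℝ _) ((permSet_finite y).isClosed_convexHull (𝕜 := ℝ)) hmem
  set c : Fin T → ℝ := fun i => f (fun j => if i = j then (1 : ℝ) else 0) with hc
  have hf : ∀ z : Fin T → ℝ, f z = ∑ i, c i * z i := by
    intro z
    conv_lhs => rw [pi_eq_sum_univ z]
    rw [map_sum]
    refine Finset.sum_congr rfl fun i _ => ?_
    rw [map_smul]
    simp [hc, mul_comm]
  set ρ : Equiv.Perm (Fin T) := Tuple.sort (fun i => -c i) with hρ
  have hcρ : Antitone (c ∘ ρ) := by
    intro i j hij
    have := Tuple.monotone_sort (fun i => -c i) hij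
    simpa using this
  set a : Fin T → ℝ := x ∘ σ with ha
  set b : Fin T → ℝ := y ∘ τ with hbdef
  have h1 : f x ≤ ∑ i, (c ∘ ρ) i * a i := by
    rw [hf]
    have : ∑ i, c i * x i = ∑ i, c i * a (σ.symm i) := by
      refine Finset.sum_congr rfl fun i _ => ?_
      simp [ha]
    rw [this]
    exact inner_le_sorted hcρ hx σ.symm
  have htot : pSum a T = pSum b T := by
    rw [pSum_top, pSum_top, ha, hbdef]
    rw [Function.comp_def, Function.comp_def, Equiv.sum_comp σ, Equiv.sum_comp τ]
    exact hsum
  have h2 : ∑ i, (c ∘ ρ) i * a i ≤ ∑ i, (c ∘ ρ) i * b i := abel_le hcρ hmaj htot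
  have h3 : ∑ i, (c ∘ ρ) i * b i = f (y ∘ ⇑(τ * ρ⁻¹)) := by
    rw [hf]
    rw [← Equiv.sum_comp ρ (fun i => c i * (y ∘ ⇑(τ * ρ⁻¹)) i)]
    refine Finset.sum_congr rfl fun i _ => ?_
    simp [hbdef, Equiv.Perm.mul_apply]
  have hmem' : y ∘ ⇑(τ * ρ⁻¹) ∈ permSet y :=
    subset_convexHull ℝ _ ⟨τ * ρ⁻¹, rfl⟩
  have := hfu _ hmem'
  rw [← h3] at this
  linarith

end MajAux

theorem permSet_subset_iff_majorize (T : ℕ) (x y : Fin T → ℝ)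
    (σ τ : Equiv.Perm (Fin T)) (hx : Antitone (x ∘ σ)) (hy : Antitone (y ∘ τ))
    (hsum : ∑ t, x t = ∑ t, y t) :
    ((∀ s ≤ T, pSum (x ∘ σ) s ≤ pSum (y ∘ τ) s) → permSet x ⊆ permSet y) ∧
      (permSet x ⊆ permSet y → ∀ s ≤ T, pSum (x ∘ σ) s ≤ pSum (y ∘ τ) s) := by
  constructor
  · intro hmaj
    have hxy : x ∈ permSet y := MajAux.mem_permSet_of_major σ τ hx hy hsum hmaj
    have hall : ∀ π : Equiv.Perm (Fin T), x ∘ π ∈ permSet y := by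
      intro π
      set L : (Fin T → ℝ) →ₗ[ℝ] (Fin T → ℝ) := LinearMap.funLeft ℝ ℝ π with hL
      have hLx : L x = x ∘ π := rfl
      have himg : L '' permSet y ⊆ permSet y := by
        rw [permSet, L.image_convexHull]
        refine convexHull_mono ?_
        rintro z ⟨w, ⟨π', rfl⟩, rfl⟩
        exact ⟨π' * π, rfl⟩
      rw [← hLx]
      exact himg ⟨x, hxy, rfl⟩
    refine convexHull_min ?_ (convex_convexHull ℝ _)
    rintro z ⟨π, rfl⟩
    exact hall π
  · intro hsub s hs
    have hx_mem : x ∈ permSet y := by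
      refine hsub (subset_convexHull ℝ _ ⟨1, ?_⟩)
      funext t; simp
    have key : permSet y ⊆ {z : Fin T → ℝ | pSum (z ∘ σ) s ≤ pSum (y ∘ τ) s} := by
      refine convexHull_min ?_ (convex_halfSpace_le (MajAux.linear_psum σ s) _)
      rintro z ⟨π, rfl⟩
      have hψ : (y ∘ π) ∘ σ = (y ∘ τ) ∘ (τ⁻¹ * π * σ : Equiv.Perm (Fin T)) := by
        funext t
        simp [Equiv.Perm.mul_apply]
      show pSum ((y ∘ π) ∘ σ) s ≤ pSum (y ∘ τ) s
      rw [hψ]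
      exact MajAux.perm_psum_le hy _ hs
    exact key hx_mem
end

section
/- For monotone (nonincreasing) vectors x, y ∈ ℝ^T, the Minkowski sum of their permutahedra equals the permutahedron of their sum: Π(x) + Π(y) = Π(x + y). -/
open Finset

namespace PermSetAux

variable {T : ℕ}

lemma comp_mem_permSet (x : Fin T → ℝ) (π : Equiv.Perm (Fin T)) : x ∘ ⇑π ∈ permSet x :=
  subset_convexHull ℝ _ ⟨π, rfl⟩

lemma permSet_comp_mem {x z : Fin T → ℝ} (hz : z ∈ permSet x) (π : Equiv.Perm (Fin T)) :
    z ∘ ⇑π ∈ permSet x := by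
  set S : Set (Fin T → ℝ) := {y | ∃ σ : Equiv.Perm (Fin T), y = x ∘ σ} with hS
  let L : (Fin T → ℝ) →ₗ[ℝ] (Fin T → ℝ) :=
    { toFun := fun v => v ∘ ⇑π, map_add' := by intros; rfl, map_smul' := by intros; rfl }
  have himg : L '' S ⊆ S := by
    rintro _ ⟨_, ⟨σ, rfl⟩, rfl⟩
    exact ⟨π.trans σ, by ext t; simp [L, Function.comp]⟩
  have h1 : L z ∈ convexHull ℝ (L '' S) := by
    rw [← L.image_convexHull]; exact ⟨z, hz, rfl⟩
  exact convexHull_mono himg h1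

/-- number of inversions of a permutation -/
def invc (τ : Equiv.Perm (Fin T)) : ℕ :=
  ((Finset.univ : Finset (Fin T × Fin T)).filter (fun p => p.1 < p.2 ∧ τ p.2 < τ p.1)).card

lemma swap_lt_swap {p q a b : Fin T} (hpq : (q : ℕ) = (p : ℕ) + 1) (hab : a < b)
    (hne : ¬(a = p ∧ b = q)) : Equiv.swap p q a < Equiv.swap p q b := by
  have hab' : (a : ℕ) < (b : ℕ) := hab
  rcases eq_or_ne a p with rfl | hap
  · have hbq : b ≠ q := fun h => hne ⟨rfl, h⟩
    have hbp : b ≠ a := (Fin.ne_of_lt hab).symm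
    rw [Equiv.swap_apply_left, Equiv.swap_apply_of_ne_of_ne hbp hbq]
    have h1 : (b : ℕ) ≠ (q : ℕ) := fun h => hbq (Fin.ext h)
    exact Fin.lt_def.2 (by omega)
  · rcases eq_or_ne a q with rfl | haq
    · have hbp : b ≠ p := fun h => hap (by simp [h, Fin.ext_iff] at hab' ⊢; omega)
      have hbq : b ≠ a := (Fin.ne_of_lt hab).symm
      rw [Equiv.swap_apply_right, Equiv.swap_apply_of_ne_of_ne hbp hbq]
      have h1 : (p : ℕ) < (b : ℕ) := by omega
      exact Fin.lt_def.2 h1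
    · rw [Equiv.swap_apply_of_ne_of_ne hap haq]
      rcases eq_or_ne b p with rfl | hbp
      · rw [Equiv.swap_apply_left]
        exact Fin.lt_def.2 (by omega)
      · rcases eq_or_ne b q with rfl | hbq
        · rw [Equiv.swap_apply_right]
          have h1 : (a : ℕ) ≠ (p : ℕ) := fun h => hap (Fin.ext h)
          exact Fin.lt_def.2 (by omega)
        · rw [Equiv.swap_apply_of_ne_of_ne hbp hbq]; exact hab

lemma invc_swap_lt {τ : Equiv.Perm (Fin T)} {p q : Fin T} (hpq : (q : ℕ) = (p : ℕ) + 1)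
    (hd : τ q < τ p) : invc (τ * Equiv.swap p q) < invc τ := by
  set s := Equiv.swap p q with hs
  have hp : p < q := Fin.lt_def.2 (by omega)
  set A := ((Finset.univ : Finset (Fin T × Fin T)).filter
    (fun r => r.1 < r.2 ∧ (τ * s) r.2 < (τ * s) r.1)) with hA
  set B := ((Finset.univ : Finset (Fin T × Fin T)).filter
    (fun r => r.1 < r.2 ∧ τ r.2 < τ r.1)) with hB
  have hpqB : (p, q) ∈ B := by simp [hB, hp, hd]
  have hle : A.card ≤ (B.erase (p, q)).card := by
    apply Finset.card_le_card_of_injOn (fun r => (s r.1, s r.2))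
    · intro r hr
      replace hr : r ∈ A := hr
      simp only [hA, Finset.mem_filter, Finset.mem_univ, true_and] at hr
      obtain ⟨h1, h2⟩ := hr
      have hne : ¬(r.1 = p ∧ r.2 = q) := by
        rintro ⟨e1, e2⟩
        rw [e1, e2] at h2
        simp only [Equiv.Perm.mul_apply, hs, Equiv.swap_apply_left, Equiv.swap_apply_right] at h2
        exact absurd hd (not_lt.2 h2.le)
      have hlt : s r.1 < s r.2 := swap_lt_swap hpq h1 hne
      show _ ∈ B.erase (p, q)
      refine Finset.mem_erase.2 ⟨?_, ?_⟩
      · rintro h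
        have e1 : s r.1 = p := congrArg Prod.fst h
        have e2 : s r.2 = q := congrArg Prod.snd h
        have f1 : r.1 = q := by
          have := congrArg s e1; simpa [hs] using this
        have f2 : r.2 = p := by
          have := congrArg s e2; simpa [hs] using this
        rw [f1, f2] at h1
        exact absurd h1 (not_lt.2 hp.le)
      · simp only [hB, Finset.mem_filter, Finset.mem_univ, true_and]
        exact ⟨hlt, by simpa [Equiv.Perm.mul_apply] using h2⟩
    · intro r1 _ r2 _ h
      have e1 : s r1.1 = s r2.1 := congrArg Prod.fst h
      have e2 : s r1.2 = s r2.2 := congrArg Prod.snd h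
      exact Prod.ext (s.injective e1) (s.injective e2)
  calc A.card ≤ (B.erase (p, q)).card := hle
    _ < B.card := Finset.card_erase_lt_of_mem hpqB

lemma eq_one_of_no_descent {τ : Equiv.Perm (Fin T)}
    (h : ∀ p q : Fin T, (q : ℕ) = (p : ℕ) + 1 → τ p < τ q) : τ = 1 := by
  have hmono : StrictMono (⇑τ) := by
    cases T with
    | zero => intro a; exact a.elim0
    | succ n =>
      rw [Fin.strictMono_iff_lt_succ]
      intro i
      exact h _ _ (by simp)
  have hid : (⇑τ : Fin T → Fin T) = id := by
    haveI : WellFoundedLT (Fin T) := inferInstance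
    have h := StrictMono.range_inj (β := Fin T) (γ := Fin T) (f := ⇑τ) (g := id)
      hmono strictMono_id
    exact h.1 (by simp [Equiv.range_eq_univ])
  exact Equiv.ext fun t => congrFun hid t

lemma add_comp_mem (x y : Fin T → ℝ) (hx : Antitone x) (hy : Antitone y)
    (τ : Equiv.Perm (Fin T)) : x + y ∘ ⇑τ ∈ permSet (x + y) := by
  suffices H : ∀ n (τ : Equiv.Perm (Fin T)), invc τ = n → x + y ∘ ⇑τ ∈ permSet (x + y) from
    H _ τ rfl
  intro n
  induction n using Nat.strong_induction_on with
  | _ n IH =>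
    intro τ hn
    by_cases hdesc : ∃ p q : Fin T, (q : ℕ) = (p : ℕ) + 1 ∧ τ q < τ p
    · obtain ⟨p, q, hpq, hd⟩ := hdesc
      set s := Equiv.swap p q with hs
      set τ' := τ * s with hτ'
      have hp : p < q := Fin.lt_def.2 (by omega)
      have hlt : invc τ' < n := hn ▸ invc_swap_lt hpq hd
      have hz' : x + y ∘ ⇑τ' ∈ permSet (x + y) := IH _ hlt τ' rfl
      have hz's : (x + y ∘ ⇑τ') ∘ ⇑s ∈ permSet (x + y) := permSet_comp_mem hz' s
      have hab : x q ≤ x p := hx hp.le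
      have hcd : y (τ p) ≤ y (τ q) := hy hd.le
      have hτ'p : τ' p = τ q := by simp [hτ', hs]
      have hτ'q : τ' q = τ p := by simp [hτ', hs]
      have hsp : s p = q := Equiv.swap_apply_left p q
      have hsq : s q = p := Equiv.swap_apply_right p q
      rcases eq_or_lt_of_le
        (show (0:ℝ) ≤ (x p - x q) + (y (τ q) - y (τ p)) by linarith) with hD0 | hD0
      · -- degenerate case: z = z'
        have ha : x p = x q := by linarith
        have hc : y (τ p) = y (τ q) := by linarith
        have heq : x + y ∘ ⇑τ = x + y ∘ ⇑τ' := by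
          funext t
          show x t + y (τ t) = x t + y (τ' t)
          by_cases htp : t = p
          · rw [htp, hτ'p, ← hc]
          · by_cases htq : t = q
            · rw [htq, hτ'q, hc]
            · have h1 : s t = t := Equiv.swap_apply_of_ne_of_ne htp htq
              rw [hτ', Equiv.Perm.mul_apply, h1]
        rw [heq]; exact hz'
      · have hDne : (x p - x q) + (y (τ q) - y (τ p)) ≠ 0 := ne_of_gt hD0
        set lam := (x p - x q) / ((x p - x q) + (y (τ q) - y (τ p))) with hlam
        have hl0 : 0 ≤ lam := div_nonneg (by linarith) hD0.le
        have hl1 : 0 ≤ 1 - lam := by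
          have : lam ≤ 1 := (div_le_one hD0).2 (by linarith)
          linarith
        have hkey : x + y ∘ ⇑τ = lam • (x + y ∘ ⇑τ') + (1 - lam) • ((x + y ∘ ⇑τ') ∘ ⇑s) := by
          funext t
          show x t + y (τ t)
            = lam * (x t + y (τ' t)) + (1 - lam) * (x (s t) + y (τ' (s t)))
          by_cases htp : t = p
          · rw [htp, hτ'p, hsp, hτ'q]
            rw [hlam]; field_simp; ring
          · by_cases htq : t = q
            · rw [htq, hτ'q, hsq, hτ'p]
              rw [hlam]; field_simp; ring
            · have h1 : s t = t := Equiv.swap_apply_of_ne_of_ne htp htq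
              have h2 : τ' t = τ t := by rw [hτ', Equiv.Perm.mul_apply, h1]
              rw [h1, h2]; ring
        rw [hkey]
        exact (convex_convexHull ℝ _) hz' hz's hl0 hl1 (by ring)
    · push_neg at hdesc
      have h1 : τ = 1 := by
        apply eq_one_of_no_descent
        intro p q hpq
        refine lt_of_le_of_ne (hdesc p q hpq) ?_
        intro h
        have h2 : p = q := τ.injective h
        rw [h2] at hpq; omega
      subst h1
      have heq : x + y ∘ ⇑(1 : Equiv.Perm (Fin T)) = (x + y) ∘ ⇑(1 : Equiv.Perm (Fin T)) := by
        funext t; rfl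
      rw [heq]
      exact comp_mem_permSet _ _

end PermSetAux

open Pointwise in
theorem permSet_add (T : ℕ) (x y : Fin T → ℝ) (hx : Antitone x) (hy : Antitone y) :
    permSet x + permSet y = permSet (x + y) := by
  have h1 : permSet x + permSet y
      = convexHull ℝ ({z | ∃ π : Equiv.Perm (Fin T), z = x ∘ π}
        + {z | ∃ π : Equiv.Perm (Fin T), z = y ∘ π}) :=
    (convexHull_add _ _).symm
  apply Set.Subset.antisymm
  · rw [h1]
    apply convexHull_min _ (convex_convexHull ℝ _)
    rintro _ ⟨u, ⟨π, rfl⟩, v, ⟨σ, rfl⟩, rfl⟩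
    show x ∘ ⇑π + y ∘ ⇑σ ∈ permSet (x + y)
    have key : x ∘ ⇑π + y ∘ ⇑σ = (x + y ∘ ⇑(σ * π⁻¹)) ∘ ⇑π := by
      funext t
      simp [Function.comp, Equiv.Perm.mul_apply]
    rw [key]
    exact PermSetAux.permSet_comp_mem (PermSetAux.add_comp_mem x y hx hy _) π
  · apply convexHull_min
    · rintro _ ⟨π, rfl⟩
      rw [h1]
      apply subset_convexHull
      exact ⟨x ∘ ⇑π, ⟨π, rfl⟩, y ∘ ⇑π, ⟨π, rfl⟩, by funext t; rfl⟩
    · rw [h1]; exact convex_convexHull ℝ _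
end

section
/- Robin Hood transfer inequality for fastest-charging profiles: for 0 ≤ e_i ≤ e_j, ι > 0 with e_j + ι ≤ mT, the vector sum v(e_i) + v(e_j + ι) is strongly majorized by v(e_i + ι) + v(e_j). -/
open Finset

lemma pSum_add {T : ℕ} (x y : Fin T → ℝ) (s : ℕ) :
    pSum (x + y) s = pSum x s + pSum y s := by
  unfold pSum
  rw [← Finset.sum_add_distrib]
  apply Finset.sum_congr rfl
  intro t _
  split_ifs <;> simp

lemma pSum_succ {T : ℕ} (x : Fin T → ℝ) (s : ℕ) (hs : s < T) :
    pSum x (s + 1) = pSum x s + x ⟨s, hs⟩ := by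
  unfold pSum
  have : ∀ t : Fin T, (if (t : ℕ) < s + 1 then x t else 0)
      = (if (t : ℕ) < s then x t else 0) + (if t = ⟨s, hs⟩ then x t else 0) := by
    intro t
    rcases eq_or_ne t ⟨s, hs⟩ with h | h
    · subst h
      simp
    · have hne : (t : ℕ) ≠ s := fun hh => h (Fin.ext hh)
      split_ifs <;> first | (exfalso; omega) | simp
  rw [Finset.sum_congr rfl (fun t _ => this t), Finset.sum_add_distrib,
    Finset.sum_ite_eq' Finset.univ ⟨s, hs⟩ x]
  simp

lemma pSum_vProf (T : ℕ) (m e : ℝ) (hm : 0 < m) (he : 0 ≤ e) (_heT : e ≤ m * T) :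
    ∀ s ≤ T, pSum (vProf T m e) s = min (m * s) e := by
  intro s
  induction s with
  | zero =>
    intro _
    simp only [pSum, Nat.cast_zero, mul_zero, Nat.not_lt_zero, if_false,
      Finset.sum_const_zero]
    rw [min_eq_left he]
  | succ s ih =>
    intro hsT
    have hs : s < T := by omega
    have hfl : (⌊e / m⌋ : ℝ) * m ≤ e := by
      have := Int.floor_le (e / m)
      calc (⌊e / m⌋ : ℝ) * m ≤ (e / m) * m := by nlinarith
        _ = e := by field_simp
    have hfl2 : e < ((⌊e / m⌋ : ℝ) + 1) * m := by
      have := Int.lt_floor_add_one (e / m)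
      calc e = (e / m) * m := by field_simp
        _ < ((⌊e / m⌋ : ℝ) + 1) * m := by nlinarith
    rw [pSum_succ _ s hs, ih (le_of_lt hs)]
    unfold vProf
    simp only
    push_cast
    rcases lt_trichotomy ((s : ℤ)) ⌊e / m⌋ with h | h | h
    · rw [if_pos (by exact_mod_cast h)]
      have hsk : (s : ℝ) + 1 ≤ (⌊e / m⌋ : ℝ) := by exact_mod_cast h
      have h1 : m * (s : ℝ) ≤ e := by nlinarith
      have h2 : m * ((s : ℝ) + 1) ≤ e := by nlinarith
      rw [min_eq_left h1, min_eq_left h2]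
      push_cast; ring
    · rw [if_neg (by exact_mod_cast h.not_lt), if_pos (by exact_mod_cast h)]
      have hk : ((⌊e / m⌋ : ℤ) : ℝ) = (s : ℝ) := by exact_mod_cast h.symm
      have h1 : m * (s : ℝ) ≤ e := by nlinarith
      have h2 : e ≤ m * ((s : ℝ) + 1) := by nlinarith
      rw [min_eq_left h1, min_eq_right h2, hk]
      ring
    · rw [if_neg (by exact_mod_cast h.not_gt), if_neg (by exact_mod_cast h.ne')]
      have hsk : (⌊e / m⌋ : ℝ) + 1 ≤ (s : ℝ) := by exact_mod_cast h
      have h1 : e ≤ m * (s : ℝ) := by nlinarith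
      have h2 : e ≤ m * ((s : ℝ) + 1) := by nlinarith
      rw [min_eq_right h1, min_eq_right h2]
      ring

theorem robin_hood_vProf (T : ℕ) (m ei ej ι : ℝ) (hm : 0 < m)
    (hei : 0 ≤ ei) (hij : ei ≤ ej) (hι : 0 < ι) (hT : ej + ι ≤ m * T) :
    (∀ s ≤ T, pSum (vProf T m ei + vProf T m (ej + ι)) s ≤
        pSum (vProf T m (ei + ι) + vProf T m ej) s) ∧
      pSum (vProf T m ei + vProf T m (ej + ι)) T =
        pSum (vProf T m (ei + ι) + vProf T m ej) T := by
  have hi : pSum (vProf T m ei + vProf T m (ej + ι)) = fun s => pSum (vProf T m ei) s + pSum (vProf T m (ej + ι)) s := by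
    funext s; exact pSum_add _ _ s
  have h1 := pSum_vProf T m ei hm hei (by linarith)
  have h2 := pSum_vProf T m (ej + ι) hm (by linarith) hT
  have h3 := pSum_vProf T m (ei + ι) hm (by linarith) (by linarith)
  have h4 := pSum_vProf T m ej hm (by linarith) (by linarith)
  constructor
  · intro s hs
    rw [pSum_add, pSum_add, h1 s hs, h2 s hs, h3 s hs, h4 s hs]
    simp only [min_def]
    split_ifs <;> linarith
  · rw [pSum_add, pSum_add, h1 T le_rfl, h2 T le_rfl, h3 T le_rfl, h4 T le_rfl]
    rw [min_eq_right (by linarith), min_eq_right hT, min_eq_right (by linarith),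
      min_eq_right (by linarith)]
    ring
end

section
/- Every point u of the flexibility set F = {u ∈ ℝ^T : 0 ≤ u_t ≤ m ∀t, ē_lower ≤ ∑ u_t ≤ ē_upper} with total energy e = ∑_t u_t lies in the permutahedron Π(v(e)), i.e., u is in the convex hull of permutations of v(e). -/
open Finset

/-- A downward-closed finset in `Fin T` is an initial segment. -/
lemma initseg_mem {T : ℕ} (S : Finset (Fin T))
    (hdc : ∀ i j : Fin T, i ≤ j → j ∈ S → i ∈ S) (i : Fin T) :
    i ∈ S ↔ (i : ℕ) < S.card := by
  constructor
  · intro hi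
    have hsub : Finset.Iic i ⊆ S := fun j hj => hdc j i (Finset.mem_Iic.mp hj) hi
    have := Finset.card_le_card hsub
    rw [Fin.card_Iic] at this
    omega
  · intro hi
    by_contra hns
    have hsub : S ⊆ Finset.Iio i := by
      intro j hj
      rw [Finset.mem_Iio]
      by_contra hji
      exact hns (hdc i j (le_of_not_gt hji) hj)
    have := Finset.card_le_card hsub
    rw [Fin.card_Iio] at this
    omega

/-- A point of the box with at most one fractional coordinate is a permutation of `vProf`. -/
lemma extreme_is_perm {T : ℕ} {m e : ℝ} (hm : 0 < m) (x : Fin T → ℝ)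
    (hx : ∀ t, 0 ≤ x t ∧ x t ≤ m) (hsum : ∑ t, x t = e)
    (hfrac : ∀ i j : Fin T, 0 < x i → x i < m → 0 < x j → x j < m → i = j) :
    ∃ π : Equiv.Perm (Fin T), x = vProf T m e ∘ π := by
  set σ := Tuple.sort (fun t => -(x t)) with hσ
  set y : Fin T → ℝ := fun i => x (σ i) with hy
  have hanti : ∀ i j : Fin T, i ≤ j → y j ≤ y i := by
    intro i j hij
    have := Tuple.monotone_sort (fun t => -(x t)) hij
    simp only [Function.comp_apply] at this
    show x (σ j) ≤ x (σ i)
    linarith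
  have hy0 : ∀ i, 0 ≤ y i := fun i => (hx _).1
  have hym : ∀ i, y i ≤ m := fun i => (hx _).2
  have hyfrac : ∀ i j, 0 < y i → y i < m → 0 < y j → y j < m → i = j := by
    intro i j h1 h2 h3 h4
    exact σ.injective (hfrac (σ i) (σ j) h1 h2 h3 h4)
  have hysum : ∑ i, y i = e := by
    rw [← hsum]
    exact Equiv.sum_comp σ x
  set A : Finset (Fin T) := univ.filter (fun i => y i = m) with hA
  set k : ℕ := A.card with hk
  have hmemA : ∀ i : Fin T, i ∈ A ↔ (i : ℕ) < k := by
    apply initseg_mem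
    intro i j hij hj
    simp only [hA, mem_filter, mem_univ, true_and] at hj ⊢
    have h3 : m ≤ y i := by rw [← hj]; exact hanti i j hij
    have h4 := hym i
    linarith
  have hsumA : ∑ i ∈ A, y i = m * k := by
    rw [Finset.sum_congr rfl (fun i hi => by
      simp only [hA, mem_filter] at hi; exact hi.2)]
    simp [mul_comm, hk]
  have hsplit : ∑ i ∈ A, y i + ∑ i ∈ univ.filter (fun i => ¬ y i = m), y i = e := by
    rw [← hysum, hA]
    exact Finset.sum_filter_add_sum_filter_not univ _ y
  have key : y = vProf T m e := by
    by_cases hex : ∃ i0, 0 < y i0 ∧ y i0 < m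
    · obtain ⟨i0, hi01, hi02⟩ := hex
      have hclass : ∀ i, y i = 0 ∨ y i = m ∨ i = i0 := by
        intro i
        rcases eq_or_lt_of_le (hy0 i) with h | h
        · exact Or.inl h.symm
        rcases eq_or_lt_of_le (hym i) with h' | h'
        · exact Or.inr (Or.inl h')
        · exact Or.inr (Or.inr (hyfrac i i0 h h' hi01 hi02))
      have hi0A : i0 ∉ A := by
        simp only [hA, mem_filter, mem_univ, true_and]
        linarith
      have hcompl : ∑ i ∈ univ.filter (fun i => ¬ y i = m), y i = y i0 := by
        apply Finset.sum_eq_single_of_mem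
        · simp only [mem_filter, mem_univ, true_and]
          linarith
        · intro b hb hbne
          simp only [mem_filter, mem_univ, true_and] at hb
          rcases hclass b with h | h | h
          · exact h
          · exact absurd h hb
          · exact absurd h hbne
      have he : e = m * k + y i0 := by rw [← hsplit, hsumA, hcompl]
      have hfloor : ⌊e / m⌋ = (k : ℤ) := by
        rw [Int.floor_eq_iff]
        constructor
        · rw [Int.cast_natCast, le_div_iff₀ hm]
          nlinarith
        · rw [div_lt_iff₀ hm]
          push_cast
          nlinarith
      have hi0k : (i0 : ℕ) = k := by
        have h1 : ¬ (i0 : ℕ) < k := fun h => hi0A ((hmemA i0).mpr h)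
        by_contra hne
        have h2 : k < (i0 : ℕ) := by omega
        have hkT : k < T := lt_trans h2 i0.isLt
        have hjlt : (⟨k, hkT⟩ : Fin T) < i0 := h2
        have hyj : y i0 ≤ y ⟨k, hkT⟩ := hanti _ i0 (le_of_lt hjlt)
        have hyj0 : 0 < y ⟨k, hkT⟩ := lt_of_lt_of_le hi01 hyj
        rcases hclass ⟨k, hkT⟩ with h | h | h
        · linarith
        · have hjA : ((⟨k, hkT⟩ : Fin T) : ℕ) < k := (hmemA _).mp (by simp [hA, h])
          have hjv : ((⟨k, hkT⟩ : Fin T) : ℕ) = k := rfl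
          omega
        · have hjv : (i0 : ℕ) = k := by rw [← h]
          omega
      funext i
      simp only [vProf, hfloor]
      rcases Nat.lt_trichotomy (i : ℕ) k with h | h | h
      · rw [if_pos (by exact_mod_cast h)]
        have hiAm := (hmemA i).mpr h
        simp only [hA, mem_filter, mem_univ, true_and] at hiAm
        exact hiAm
      · have : i = i0 := Fin.ext (by omega)
        rw [if_neg (by omega), if_pos (by exact_mod_cast h), this]
        push_cast
        linarith
      · have hiA : i ∉ A := fun hc => by rw [hmemA] at hc; omega
        have hine : i ≠ i0 := fun hc => by rw [hc] at h; omega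
        rw [if_neg (by exact_mod_cast by omega : ¬ ((i:ℕ):ℤ) < (k:ℤ)),
            if_neg (by exact_mod_cast by omega : ¬ ((i:ℕ):ℤ) = (k:ℤ))]
        rcases hclass i with h' | h' | h'
        · exact h'
        · exact absurd ((hmemA i).mp (by simp [hA, h'])) (fun hc => by omega)
        · exact absurd h' hine
    · push_neg at hex
      have hclass : ∀ i, y i = 0 ∨ y i = m := by
        intro i
        rcases eq_or_lt_of_le (hy0 i) with h | h
        · exact Or.inl h.symm
        · exact Or.inr (le_antisymm (hym i) (hex i h))
      have hcompl : ∑ i ∈ univ.filter (fun i => ¬ y i = m), y i = 0 := by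
        apply Finset.sum_eq_zero
        intro b hb
        simp only [mem_filter, mem_univ, true_and] at hb
        rcases hclass b with h | h
        · exact h
        · exact absurd h hb
      have he : e = m * k := by rw [← hsplit, hsumA, hcompl, add_zero]
      have hfloor : ⌊e / m⌋ = (k : ℤ) := by
        rw [he, mul_comm, mul_div_assoc, div_self (ne_of_gt hm), mul_one]
        exact_mod_cast Int.floor_natCast k
      funext i
      simp only [vProf, hfloor]
      rcases Nat.lt_or_ge (i : ℕ) k with h | h
      · rw [if_pos (by exact_mod_cast h)]
        have hiAm := (hmemA i).mpr h
        simp only [hA, mem_filter, mem_univ, true_and] at hiAm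
        exact hiAm
      · have hiA : i ∉ A := fun hc => by rw [hmemA] at hc; omega
        have hyi : y i = 0 := by
          rcases hclass i with h' | h'
          · exact h'
          · exact absurd ((hmemA i).mp (by simp [hA, h'])) (fun hc => by omega)
        rw [if_neg (by exact_mod_cast by omega : ¬ ((i:ℕ):ℤ) < (k:ℤ))]
        split_ifs with hik
        · push_cast
          linarith
        · exact hyi
  refine ⟨σ.symm, funext fun t => ?_⟩
  have h1 : x t = y (σ.symm t) := by simp [hy]
  rw [h1, key]
  simp

theorem flexSet_mem_permSet (T : ℕ) (m el eu : ℝ) (hm : 0 < m)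
    (h0 : 0 ≤ el) (hle : el ≤ eu) (heu : eu ≤ m * T)
    (u : Fin T → ℝ) (hu : ∀ t, 0 ≤ u t ∧ u t ≤ m)
    (hl : el ≤ ∑ t, u t) (hh : ∑ t, u t ≤ eu) :
    u ∈ permSet (vProf T m (∑ t, u t)) := by
  set e := ∑ t, u t with he
  set K : Set (Fin T → ℝ) := {x | (∀ t, 0 ≤ x t ∧ x t ≤ m) ∧ ∑ t, x t = e} with hK
  have hKconv : Convex ℝ K := by
    intro x hx y hy a b ha hb hab
    refine ⟨fun t => ?_, ?_⟩
    · have h1 := (hx.1 t).1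
      have h2 := (hx.1 t).2
      have h3 := (hy.1 t).1
      have h4 := (hy.1 t).2
      simp only [Pi.add_apply, Pi.smul_apply, smul_eq_mul]
      constructor
      · nlinarith
      · nlinarith
    · simp only [Pi.add_apply, Pi.smul_apply, smul_eq_mul]
      rw [Finset.sum_add_distrib, ← Finset.mul_sum, ← Finset.mul_sum, hx.2, hy.2]
      nlinarith
  have hKclosed : IsClosed K := by
    have : K = (⋂ t, (fun x : Fin T → ℝ => x t) ⁻¹' Set.Icc 0 m) ∩
        ((fun x : Fin T → ℝ => ∑ t, x t) ⁻¹' {e}) := by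
      ext x
      simp [hK, Set.mem_iInter, Set.mem_Icc, forall_and]
    rw [this]
    exact IsClosed.inter
      (isClosed_iInter fun t => isClosed_Icc.preimage (continuous_apply t))
      (isClosed_singleton.preimage (continuous_finset_sum _ fun t _ => continuous_apply t))
  have hKcomp : IsCompact K := by
    have hbox : IsCompact (Set.pi Set.univ (fun _ : Fin T => Set.Icc (0:ℝ) m)) :=
      isCompact_univ_pi fun _ => isCompact_Icc
    apply hbox.of_isClosed_subset hKclosed
    intro x hx
    rw [Set.mem_univ_pi]
    intro t
    exact ⟨(hx.1 t).1, (hx.1 t).2⟩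
  have huK : u ∈ K := ⟨hu, rfl⟩
  have hKM := closure_convexHull_extremePoints hKcomp hKconv
  set S : Set (Fin T → ℝ) := {y | ∃ π : Equiv.Perm (Fin T), y = vProf T m e ∘ π} with hS
  have hEP : K.extremePoints ℝ ⊆ S := by
    intro x hxe
    obtain ⟨hxK, hxext⟩ := hxe
    refine extreme_is_perm hm x hxK.1 hxK.2 ?_
    intro i j h1 h2 h3 h4
    by_contra hij
    set ε := min (min (x i) (m - x i)) (min (x j) (m - x j)) with hε
    have hε0 : 0 < ε := by
      apply lt_min (lt_min h1 (by linarith)) (lt_min h3 (by linarith))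
    have hεi1 : ε ≤ x i := le_trans (min_le_left _ _) (min_le_left _ _)
    have hεi2 : ε ≤ m - x i := le_trans (min_le_left _ _) (min_le_right _ _)
    have hεj1 : ε ≤ x j := le_trans (min_le_right _ _) (min_le_left _ _)
    have hεj2 : ε ≤ m - x j := le_trans (min_le_right _ _) (min_le_right _ _)
    set y := fun t => x t + (if t = i then ε else 0) - (if t = j then ε else 0) with hy
    set z := fun t => x t - (if t = i then ε else 0) + (if t = j then ε else 0) with hz
    have hyK : y ∈ K := by
      refine ⟨fun t => ?_, ?_⟩
      · simp only [hy]
        have h5 := (hxK.1 t).1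
        have h6 := (hxK.1 t).2
        split_ifs with hti htj htj
        · exact absurd (hti ▸ htj : i = j) hij
        · constructor <;> linarith [hti ▸ h5, hti ▸ h6, hti ▸ hεi2]
        · constructor <;> linarith [htj ▸ h5, htj ▸ h6, htj ▸ hεj1]
        · constructor <;> linarith
      · simp only [hy, Finset.sum_sub_distrib, Finset.sum_add_distrib,
          Finset.sum_ite_eq' univ, mem_univ, if_true, hxK.2]
        ring
    have hzK : z ∈ K := by
      refine ⟨fun t => ?_, ?_⟩
      · simp only [hz]
        have h5 := (hxK.1 t).1
        have h6 := (hxK.1 t).2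
        split_ifs with hti htj htj
        · exact absurd (hti ▸ htj : i = j) hij
        · constructor <;> linarith [hti ▸ h5, hti ▸ h6, hti ▸ hεi1]
        · constructor <;> linarith [htj ▸ h5, htj ▸ h6, htj ▸ hεj2]
        · constructor <;> linarith
      · simp only [hz, Finset.sum_sub_distrib, Finset.sum_add_distrib,
          Finset.sum_ite_eq' univ, mem_univ, if_true, hxK.2]
        ring
    have hseg : x ∈ openSegment ℝ y z := by
      refine ⟨1/2, 1/2, by norm_num, by norm_num, by norm_num, ?_⟩
      funext t
      simp only [Pi.add_apply, Pi.smul_apply, smul_eq_mul, hy, hz]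
      ring
    have hyx : y = x := hxext hyK hzK hseg
    have : y i = x i := by rw [hyx]
    simp only [hy, eq_self_iff_true, if_true, if_neg hij, sub_zero] at this
    linarith
  have hSfin : S.Finite := by
    have : S = Set.range (fun π : Equiv.Perm (Fin T) => vProf T m e ∘ π) := by
      ext w
      simp [hS, Set.mem_range, eq_comm]
    rw [this]
    exact Set.finite_range _
  have hsub : K ⊆ convexHull ℝ S :=
    calc K = closure (convexHull ℝ (K.extremePoints ℝ)) := hKM.symm
      _ ⊆ closure (convexHull ℝ S) := closure_mono (convexHull_mono hEP)
      _ = convexHull ℝ S := (hSfin.isClosed_convexHull (𝕜 := ℝ)).closure_eq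
  exact hsub huK
end

section
/- F(ξ) equals the convex hull of the points {w_t^π(ξ) : t ∈ {0,...,T}, π ∈ S_T}, where w_{t,s}(ξ) = v_s(ē_lower) if t < s and w_{t,s}(ξ) = v_s(ē_upper) if t ≥ s. -/
open Finset

/-- Vertex generators `w_t` for the individual flexibility set (m = 1):
coordinate `s` (0-based) equals `v_s(el)` when (1-based) `t < s`, i.e. `t ≤ s`
in 0-based terms, and `v_s(eu)` when `t ≥ s`. -/
noncomputable def wVert (T : ℕ) (el eu : ℝ) (t : Fin (T + 1)) : Fin T → ℝ :=
  fun s => if (t : ℕ) ≤ (s : ℕ) then vProf T 1 el s else vProf T 1 eu s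

lemma vProf_eq_min (T : ℕ) (e : ℝ) (he : 0 ≤ e) (s : Fin T) :
    vProf T 1 e s = min e ((s : ℝ) + 1) - min e (s : ℝ) := by
  unfold vProf
  rw [div_one]
  rcases lt_trichotomy ((s : ℕ) : ℤ) ⌊e⌋ with h | h | h
  · rw [if_pos h]
    have h1 : ((s : ℕ) : ℤ) + 1 ≤ ⌊e⌋ := h
    have h2 : (((s : ℕ) : ℤ) + 1 : ℝ) ≤ e := by exact_mod_cast Int.le_floor.mp h1
    push_cast at h2
    rw [min_eq_right (by linarith), min_eq_right (by linarith)]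
    ring
  · rw [if_neg (by omega), if_pos h]
    have hfl : ((⌊e⌋ : ℤ) : ℝ) = ((s : ℕ) : ℝ) := by exact_mod_cast congrArg (fun z : ℤ => (z : ℝ)) h.symm
    have hs : ((s : ℕ) : ℝ) ≤ e := by
      have := Int.floor_le e; rw [hfl] at this; exact this
    have hs1 : e < ((s : ℕ) : ℝ) + 1 := by
      have := Int.lt_floor_add_one e; rw [hfl] at this; exact this
    rw [min_eq_left (by linarith), min_eq_right hs, hfl]
    ring
  · rw [if_neg (by omega), if_neg (by omega)]
    have h1 : (⌊e⌋ : ℤ) + 1 ≤ ((s : ℕ) : ℤ) := h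
    have h2 : e < ((s : ℕ) : ℝ) := by
      have := Int.lt_floor_add_one e
      have h3 : ((⌊e⌋ : ℤ) : ℝ) + 1 ≤ ((s : ℕ) : ℝ) := by exact_mod_cast h1
      linarith
    rw [min_eq_left (by linarith), min_eq_left (by linarith)]
    ring

lemma vProf_nonneg (T : ℕ) (e : ℝ) (he : 0 ≤ e) (s : Fin T) : 0 ≤ vProf T 1 e s := by
  rw [vProf_eq_min T e he s]
  have : min e (s : ℝ) ≤ min e ((s : ℝ) + 1) := min_le_min le_rfl (by linarith)
  linarith

lemma vProf_le_one (T : ℕ) (e : ℝ) (he : 0 ≤ e) (s : Fin T) : vProf T 1 e s ≤ 1 := by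
  rw [vProf_eq_min T e he s]
  rcases min_cases e ((s : ℝ) + 1) with ⟨h1, h2⟩ | ⟨h1, h2⟩ <;>
    rcases min_cases e (s : ℝ) with ⟨h3, h4⟩ | ⟨h3, h4⟩ <;> simp [h1, h3] <;> linarith

lemma vProf_eq_one (T : ℕ) (e : ℝ) (he : 0 ≤ e) (s : Fin T) (hs : (s : ℝ) + 1 ≤ e) :
    vProf T 1 e s = 1 := by
  rw [vProf_eq_min T e he s, min_eq_right hs, min_eq_right (by linarith)]
  ring

lemma vProf_eq_zero (T : ℕ) (e : ℝ) (he : 0 ≤ e) (s : Fin T) (hs : e ≤ (s : ℝ)) :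
    vProf T 1 e s = 0 := by
  rw [vProf_eq_min T e he s, min_eq_left hs, min_eq_left (by linarith)]
  ring

lemma vProf_eq_mid (T : ℕ) (e : ℝ) (he : 0 ≤ e) (s : Fin T) (h1 : (s : ℝ) ≤ e)
    (h2 : e ≤ (s : ℝ) + 1) : vProf T 1 e s = e - (s : ℝ) := by
  rw [vProf_eq_min T e he s, min_eq_left h2, min_eq_right h1]

lemma wVert_nonneg (T : ℕ) (el eu : ℝ) (h0 : 0 ≤ el) (h0u : 0 ≤ eu) (t : Fin (T + 1))
    (s : Fin T) : 0 ≤ wVert T el eu t s := by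
  unfold wVert; split
  · exact vProf_nonneg T el h0 s
  · exact vProf_nonneg T eu h0u s

lemma wVert_le_one (T : ℕ) (el eu : ℝ) (h0 : 0 ≤ el) (h0u : 0 ≤ eu) (t : Fin (T + 1))
    (s : Fin T) : wVert T el eu t s ≤ 1 := by
  unfold wVert; split
  · exact vProf_le_one T el h0 s
  · exact vProf_le_one T eu h0u s

lemma sum_wVert (T : ℕ) (el eu : ℝ) (h0 : 0 ≤ el) (hle : el ≤ eu) (heu : eu ≤ (T : ℝ))
    (t : Fin (T + 1)) :
    ∑ s, wVert T el eu t s = min eu (t : ℝ) + el - min el (t : ℝ) := by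
  have h0u : (0 : ℝ) ≤ eu := le_trans h0 hle
  set H : ℕ → ℝ := fun x =>
    min eu (min ((t : ℕ) : ℝ) (x : ℝ)) + min el (x : ℝ) - min el (min ((t : ℕ) : ℝ) (x : ℝ))
    with hH
  have hstep : ∀ s : Fin T, wVert T el eu t s = H ((s : ℕ) + 1) - H (s : ℕ) := by
    intro s
    unfold wVert
    by_cases hts : (t : ℕ) ≤ (s : ℕ)
    · rw [if_pos hts]
      have h1 : ((t : ℕ) : ℝ) ≤ ((s : ℕ) : ℝ) := by exact_mod_cast hts
      have h2 : ((t : ℕ) : ℝ) ≤ (((s : ℕ) + 1 : ℕ) : ℝ) := by push_cast; linarith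
      rw [vProf_eq_min T el h0 s, hH]
      simp only [min_eq_left h1, min_eq_left h2]
      push_cast
      ring
    · rw [if_neg hts]
      push_neg at hts
      have h1 : ((s : ℕ) : ℝ) ≤ ((t : ℕ) : ℝ) := by exact_mod_cast le_of_lt hts
      have h2 : (((s : ℕ) + 1 : ℕ) : ℝ) ≤ ((t : ℕ) : ℝ) := by exact_mod_cast hts
      rw [vProf_eq_min T eu h0u s, hH]
      simp only [min_eq_right h1, min_eq_right h2]
      push_cast
      ring
  calc ∑ s, wVert T el eu t s = ∑ s : Fin T, (H ((s : ℕ) + 1) - H (s : ℕ)) := by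
        exact Finset.sum_congr rfl fun s _ => hstep s
    _ = ∑ i ∈ Finset.range T, (H (i + 1) - H i) := by
        rw [Fin.sum_univ_eq_sum_range (fun i => H (i + 1) - H i)]
    _ = H T - H 0 := Finset.sum_range_sub H T
    _ = min eu (t : ℝ) + el - min el (t : ℝ) := by
        have ht : ((t : ℕ) : ℝ) ≤ (T : ℝ) := by exact_mod_cast Fin.is_le t
        have h0t : (0 : ℝ) ≤ ((t : ℕ) : ℝ) := Nat.cast_nonneg _
        rw [hH]
        simp only [Nat.cast_zero, min_eq_left ht]
        rw [min_eq_left (le_trans hle heu), min_eq_right h0t, min_eq_right h0,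
          min_eq_right h0u]
        ring

lemma sum_wVert_ge (T : ℕ) (el eu : ℝ) (h0 : 0 ≤ el) (hle : el ≤ eu) (heu : eu ≤ (T : ℝ))
    (t : Fin (T + 1)) : el ≤ ∑ s, wVert T el eu t s := by
  rw [sum_wVert T el eu h0 hle heu t]
  have : min el ((t : ℕ) : ℝ) ≤ min eu ((t : ℕ) : ℝ) := min_le_min hle le_rfl
  linarith

lemma sum_wVert_le (T : ℕ) (el eu : ℝ) (h0 : 0 ≤ el) (hle : el ≤ eu) (heu : eu ≤ (T : ℝ))
    (t : Fin (T + 1)) : ∑ s, wVert T el eu t s ≤ eu := by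
  rw [sum_wVert T el eu h0 hle heu t]
  rcases le_total el ((t : ℕ) : ℝ) with h | h
  · rw [min_eq_left h]
    have := min_le_left eu ((t : ℕ) : ℝ)
    linarith
  · rw [min_eq_right h, min_eq_right (le_trans h hle)]
    linarith

/-- Two tuples with the same fiber cardinalities differ by a permutation. -/
lemma exists_perm_of_count_eq {n : ℕ} (u w : Fin n → ℝ)
    (h : ∀ a : ℝ, (univ.filter fun i => u i = a).card = (univ.filter fun i => w i = a).card) :
    ∃ π : Equiv.Perm (Fin n), u = w ∘ π := by
  classical
  have hms : ∀ f : Fin n → ℝ, ∀ σ : Equiv.Perm (Fin n),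
      Multiset.map (f ∘ σ) Finset.univ.val = Multiset.map f Finset.univ.val := by
    intro f σ
    have : Multiset.map (⇑σ) Finset.univ.val = Finset.univ.val := by
      have := Finset.map_univ_equiv σ
      calc Multiset.map (⇑σ) Finset.univ.val = (Finset.univ.map σ.toEmbedding).val := by
            rw [Finset.map_val]; rfl
        _ = Finset.univ.val := by rw [this]
    calc Multiset.map (f ∘ σ) Finset.univ.val
        = Multiset.map f (Multiset.map (⇑σ) Finset.univ.val) := by
          rw [Multiset.map_map]
      _ = Multiset.map f Finset.univ.val := by rw [this]
  have hmult : Multiset.map u Finset.univ.val = Multiset.map w Finset.univ.val := by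
    refine Multiset.ext.mpr fun a => ?_
    rw [Multiset.count_map, Multiset.count_map]
    have e1 : Multiset.filter (fun i => a = u i) Finset.univ.val
        = Multiset.filter (fun i => u i = a) Finset.univ.val :=
      Multiset.filter_congr (fun x _ => ⟨Eq.symm, Eq.symm⟩)
    have e2 : Multiset.filter (fun i => a = w i) Finset.univ.val
        = Multiset.filter (fun i => w i = a) Finset.univ.val :=
      Multiset.filter_congr (fun x _ => ⟨Eq.symm, Eq.symm⟩)
    rw [e1, e2]
    have f1 : Multiset.card (Multiset.filter (fun i => u i = a) Finset.univ.val)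
        = (univ.filter fun i => u i = a).card := by
      rw [← Finset.filter_val]; rfl
    have f2 : Multiset.card (Multiset.filter (fun i => w i = a) Finset.univ.val)
        = (univ.filter fun i => w i = a).card := by
      rw [← Finset.filter_val]; rfl
    rw [f1, f2]; exact h a
  set sigma := Tuple.sort u with hsig
  set tau := Tuple.sort w with htau
  have hmono1 : Monotone (u ∘ sigma) := Tuple.monotone_sort u
  have hmono2 : Monotone (w ∘ tau) := Tuple.monotone_sort w
  have hperm : List.Perm (List.ofFn (u ∘ sigma)) (List.ofFn (w ∘ tau)) := by
    rw [← Multiset.coe_eq_coe]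
    have g1 : ((List.ofFn (u ∘ sigma) : List ℝ) : Multiset ℝ)
        = Multiset.map (u ∘ sigma) Finset.univ.val := by
      rw [List.ofFn_eq_map]
      rfl
    have g2 : ((List.ofFn (w ∘ tau) : List ℝ) : Multiset ℝ)
        = Multiset.map (w ∘ tau) Finset.univ.val := by
      rw [List.ofFn_eq_map]
      rfl
    rw [g1, g2, hms u sigma, hms w tau, hmult]
  have heq : u ∘ sigma = w ∘ tau := by
    apply List.ofFn_injective
    exact List.Perm.eq_of_sortedLE (hmono1.sortedLE_ofFn) (hmono2.sortedLE_ofFn) hperm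
  refine ⟨sigma.symm.trans tau, funext fun i => ?_⟩
  have := congrFun heq (sigma.symm i)
  simpa using this

lemma card_filter_lt (T k : ℕ) (hk : k ≤ T) :
    (univ.filter fun s : Fin T => (s : ℕ) < k).card = k := by
  classical
  have : (univ.filter fun s : Fin T => (s : ℕ) < k)
      = Finset.map (Fin.castLEEmb hk) univ := by
    ext s
    simp only [Finset.mem_filter, Finset.mem_map, Finset.mem_univ, true_and]
    constructor
    · intro hs
      exact ⟨⟨(s : ℕ), hs⟩, Fin.ext rfl⟩
    · rintro ⟨j, rfl⟩
      exact j.isLt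
  rw [this, Finset.card_map, Finset.card_univ, Fintype.card_fin]

lemma three_partition {n : ℕ} (f : Fin n → ℝ) (x y z : ℝ)
    (hxy : x ≠ y) (hxz : x ≠ z) (hyz : y ≠ z)
    (hv : ∀ i, f i = x ∨ f i = y ∨ f i = z) :
    (univ.filter fun i => f i = x).card + (univ.filter fun i => f i = y).card
      + (univ.filter fun i => f i = z).card = n := by
  classical
  have hd1 : Disjoint (univ.filter fun i => f i = x) (univ.filter fun i => f i = y) := by
    rw [Finset.disjoint_left]
    intro i hi hj
    simp only [Finset.mem_filter] at hi hj
    exact hxy (hi.2 ▸ hj.2)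
  have hd2 : Disjoint ((univ.filter fun i => f i = x) ∪ (univ.filter fun i => f i = y))
      (univ.filter fun i => f i = z) := by
    rw [Finset.disjoint_left]
    intro i hi hj
    simp only [Finset.mem_union, Finset.mem_filter] at hi hj
    rcases hi with hi | hi
    · exact hxz (hi.2 ▸ hj.2)
    · exact hyz (hi.2 ▸ hj.2)
  have hcover : (univ.filter fun i => f i = x) ∪ (univ.filter fun i => f i = y)
      ∪ (univ.filter fun i => f i = z) = univ := by
    ext i
    simp only [Finset.mem_union, Finset.mem_filter, Finset.mem_univ, true_and, iff_true]
    have := hv i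
    tauto
  have := Finset.card_union_of_disjoint hd2
  rw [hcover] at this
  rw [Finset.card_union_of_disjoint hd1] at this
  rw [Finset.card_univ, Fintype.card_fin] at this
  omega

lemma count_eq_of_three {n : ℕ} (x y z : ℝ) (hxy : x ≠ y) (hxz : x ≠ z) (hyz : y ≠ z)
    (u w : Fin n → ℝ)
    (hu : ∀ i, u i = x ∨ u i = y ∨ u i = z) (hw : ∀ i, w i = x ∨ w i = y ∨ w i = z)
    (hx : (univ.filter fun i => u i = x).card = (univ.filter fun i => w i = x).card)
    (hy : (univ.filter fun i => u i = y).card = (univ.filter fun i => w i = y).card) :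
    ∀ a : ℝ, (univ.filter fun i => u i = a).card = (univ.filter fun i => w i = a).card := by
  classical
  intro a
  by_cases hax : a = x
  · subst hax; exact hx
  by_cases hay : a = y
  · subst hay; exact hy
  by_cases haz : a = z
  · have h1 := three_partition u x y z hxy hxz hyz hu
    have h2 := three_partition w x y z hxy hxz hyz hw
    simp only [haz]
    omega
  · have e1 : (univ.filter fun i => u i = a) = ∅ := by
      rw [Finset.filter_eq_empty_iff]
      intro i _
      rcases hu i with h | h | h <;> rw [h] <;> tauto
    have e2 : (univ.filter fun i => w i = a) = ∅ := by
      rw [Finset.filter_eq_empty_iff]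
      intro i _
      rcases hw i with h | h | h <;> rw [h] <;> tauto
    rw [e1, e2]

lemma sum_eq_card_of_01 {n : ℕ} (s : Finset (Fin n)) (u : Fin n → ℝ)
    (h : ∀ i ∈ s, u i = 0 ∨ u i = 1) :
    ∑ i ∈ s, u i = ((s.filter fun i => u i = 1).card : ℝ) := by
  classical
  rw [← Finset.sum_filter_add_sum_filter_not s (fun i => u i = 1) u]
  have h1 : ∑ i ∈ s.filter (fun i => u i = 1), u i
      = ((s.filter fun i => u i = 1).card : ℝ) := by
    rw [Finset.sum_congr rfl (fun i hi => (Finset.mem_filter.mp hi).2)]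
    simp
  have h2 : ∑ i ∈ s.filter (fun i => ¬ u i = 1), u i = 0 := by
    apply Finset.sum_eq_zero
    intro i hi
    rcases Finset.mem_filter.mp hi with ⟨his, hne⟩
    rcases h i his with h0 | h1
    · exact h0
    · exact absurd h1 hne
  rw [h1, h2, add_zero]

lemma fiber_vProf (T : ℕ) (e : ℝ) (k : ℕ) (c : ℝ) (hc0 : 0 < c) (hc1 : c < 1)
    (he : e = (k : ℝ) + c) (hkT : k < T) :
    (∀ s : Fin T, vProf T 1 e s = 1 ∨ vProf T 1 e s = c ∨ vProf T 1 e s = 0) ∧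
    (univ.filter fun s : Fin T => vProf T 1 e s = 1).card = k ∧
    (univ.filter fun s : Fin T => vProf T 1 e s = c).card = 1 := by
  classical
  have he0 : (0 : ℝ) ≤ e := by rw [he]; positivity
  have hval : ∀ s : Fin T, vProf T 1 e s = if (s : ℕ) < k then 1
      else if (s : ℕ) = k then c else 0 := by
    intro s
    rcases lt_trichotomy (s : ℕ) k with h | h | h
    · rw [if_pos h]
      apply vProf_eq_one T e he0
      have : ((s : ℕ) : ℝ) + 1 ≤ (k : ℝ) := by exact_mod_cast h
      rw [he]; linarith
    · rw [if_neg (by omega), if_pos h]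
      have hsk : ((s : ℕ) : ℝ) = (k : ℝ) := by exact_mod_cast h
      rw [vProf_eq_mid T e he0 s (by rw [he, hsk]; linarith) (by rw [he, hsk]; linarith),
        he, hsk]
      ring
    · rw [if_neg (by omega), if_neg (by omega)]
      apply vProf_eq_zero T e he0
      have : (k : ℝ) + 1 ≤ ((s : ℕ) : ℝ) := by exact_mod_cast h
      rw [he]; linarith
  refine ⟨fun s => ?_, ?_, ?_⟩
  · rw [hval s]
    split
    · exact Or.inl rfl
    · split
      · exact Or.inr (Or.inl rfl)
      · exact Or.inr (Or.inr rfl)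
  · have : (univ.filter fun s : Fin T => vProf T 1 e s = 1)
        = (univ.filter fun s : Fin T => (s : ℕ) < k) := by
      apply Finset.filter_congr
      intro s _
      rw [hval s]
      rcases lt_trichotomy (s : ℕ) k with h | h | h
      · simp [h]
      · simp only [if_neg (by omega : ¬ (s : ℕ) < k), if_pos h]
        constructor
        · intro hc; exact absurd hc (ne_of_lt hc1)
        · intro hc; exact absurd hc (by omega)
      · simp only [if_neg (by omega : ¬ (s : ℕ) < k), if_neg (by omega : ¬ (s : ℕ) = k)]
        norm_num
        omega
    rw [this, card_filter_lt T k (le_of_lt hkT)]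
  · have : (univ.filter fun s : Fin T => vProf T 1 e s = c) = {(⟨k, hkT⟩ : Fin T)} := by
      ext s
      simp only [Finset.mem_filter, Finset.mem_univ, true_and, Finset.mem_singleton]
      rw [hval s]
      rcases lt_trichotomy (s : ℕ) k with h | h | h
      · rw [if_pos h]
        constructor
        · intro hc; exact absurd hc (ne_of_gt hc1)
        · intro hs; rw [hs] at h; simp at h
      · rw [if_neg (by omega), if_pos h]
        constructor
        · intro _; exact Fin.ext h
        · intro _; rfl
      · rw [if_neg (by omega), if_neg (by omega)]
        constructor
        · intro hc; exact absurd hc.symm (ne_of_gt hc0)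
        · intro hs; rw [hs] at h; simp at h
    rw [this, Finset.card_singleton]

lemma wVert_indicator (T : ℕ) (el eu : ℝ) (h0 : 0 ≤ el) (hle : el ≤ eu) (k : ℕ)
    (hkT1 : k < T + 1) (hlk : el ≤ (k : ℝ)) (hku : (k : ℝ) ≤ eu) (s : Fin T) :
    wVert T el eu ⟨k, hkT1⟩ s = if (s : ℕ) < k then 1 else 0 := by
  have h0u : (0 : ℝ) ≤ eu := le_trans h0 hle
  unfold wVert
  simp only []
  by_cases hks : k ≤ (s : ℕ)
  · rw [if_pos hks, if_neg (by omega)]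
    apply vProf_eq_zero T el h0
    have : (k : ℝ) ≤ ((s : ℕ) : ℝ) := by exact_mod_cast hks
    linarith
  · rw [if_neg hks, if_pos (by omega)]
    apply vProf_eq_one T eu h0u
    have : ((s : ℕ) : ℝ) + 1 ≤ (k : ℝ) := by exact_mod_cast (by omega : (s : ℕ) + 1 ≤ k)
    linarith

section FSet

variable (T : ℕ) (el eu : ℝ)

def FSet : Set (Fin T → ℝ) :=
  {u : Fin T → ℝ | (∀ t, 0 ≤ u t ∧ u t ≤ 1) ∧ el ≤ ∑ t, u t ∧ ∑ t, u t ≤ eu}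

lemma convex_FSet : Convex ℝ (FSet T el eu) := by
  rintro p ⟨hp1, hp2, hp3⟩ q ⟨hq1, hq2, hq3⟩ a b ha hb hab
  have hcoord : ∀ t, (a • p + b • q) t = a * p t + b * q t := by
    intro t; simp [smul_eq_mul]
  have hsum : ∑ t, (a • p + b • q) t = a * ∑ t, p t + b * ∑ t, q t := by
    rw [Finset.sum_congr rfl (fun t _ => hcoord t), Finset.sum_add_distrib,
      ← Finset.mul_sum, ← Finset.mul_sum]
  refine ⟨fun t => ⟨?_, ?_⟩, ?_, ?_⟩
  · rw [hcoord t]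
    have := (hp1 t).1; have := (hq1 t).1
    positivity
  · rw [hcoord t]
    have := (hp1 t).2; have := (hq1 t).2
    nlinarith [(hp1 t).1, (hq1 t).1]
  · rw [hsum]
    have hel : a * el + b * el = el := by rw [← add_mul, hab, one_mul]
    have := mul_le_mul_of_nonneg_left hp2 ha
    have := mul_le_mul_of_nonneg_left hq2 hb
    linarith
  · rw [hsum]
    have heu' : a * eu + b * eu = eu := by rw [← add_mul, hab, one_mul]
    have := mul_le_mul_of_nonneg_left hp3 ha
    have := mul_le_mul_of_nonneg_left hq3 hb
    linarith

lemma isClosed_FSet : IsClosed (FSet T el eu) := by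
  have : FSet T el eu = (⋂ t, {u : Fin T → ℝ | 0 ≤ u t} ∩ {u | u t ≤ 1}) ∩
      ({u : Fin T → ℝ | el ≤ ∑ t, u t} ∩ {u | ∑ t, u t ≤ eu}) := by
    ext u
    simp only [FSet, Set.mem_inter_iff, Set.mem_iInter, Set.mem_setOf_eq]
  rw [this]
  have hsum : Continuous fun u : Fin T → ℝ => ∑ t, u t :=
    continuous_finset_sum _ fun i _ => continuous_apply i
  refine IsClosed.inter (isClosed_iInter fun t => IsClosed.inter ?_ ?_) (IsClosed.inter ?_ ?_)
  · exact isClosed_le continuous_const (continuous_apply t)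
  · exact isClosed_le (continuous_apply t) continuous_const
  · exact isClosed_le continuous_const hsum
  · exact isClosed_le hsum continuous_const

lemma isCompact_FSet : IsCompact (FSet T el eu) := by
  apply IsCompact.of_isClosed_subset (isCompact_Icc (a := (0 : Fin T → ℝ)) (b := 1))
    (isClosed_FSet T el eu)
  rintro u ⟨h1, _, _⟩
  constructor
  · intro t; exact (h1 t).1
  · intro t; exact (h1 t).2

end FSet

set_option maxHeartbeats 1000000 in
lemma extremePoints_FSet_subset (T : ℕ) (el eu : ℝ) (h0 : 0 ≤ el) (hle : el ≤ eu)
    (heu : eu ≤ (T : ℝ)) :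
    (FSet T el eu).extremePoints ℝ ⊆
      {y | ∃ (t : Fin (T + 1)) (π : Equiv.Perm (Fin T)), y = (wVert T el eu t) ∘ π} := by
  classical
  rintro u ⟨huF, hext⟩
  obtain ⟨hb, hsl, hsu⟩ := huF
  have hsingle : ∀ (a t : Fin T), (Pi.single a 1 : Fin T → ℝ) t = if t = a then (1 : ℝ) else 0 := by
    intro a t
    rcases eq_or_ne t a with rfl | h
    · simp
    · rw [Pi.single_eq_of_ne h, if_neg h]
  have hpert : ∀ d : Fin T → ℝ, ∀ ε : ℝ, 0 < ε →
      (u + ε • d) ∈ FSet T el eu → (u - ε • d) ∈ FSet T el eu → d = 0 := by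
    intro d ε hε hx hy
    have hseg : u ∈ openSegment ℝ (u + ε • d) (u - ε • d) := by
      refine ⟨1/2, 1/2, by norm_num, by norm_num, by norm_num, ?_⟩
      module
    have h1 := hext hx hy hseg
    have h2 : ε • d = 0 := by
      have := congrArg (fun v => v - u) h1
      simpa using this
    rcases smul_eq_zero.mp h2 with h | h
    · exact absurd h (ne_of_gt hε)
    · exact h
  -- Claim 1: at most one fractional coordinate
  have claim1 : ∀ i j : Fin T, i ≠ j → u i ≠ 0 → u i ≠ 1 → u j ≠ 0 → u j ≠ 1 → False := by
    intro i j hij hi0 hi1 hj0 hj1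
    have hi0' : 0 < u i := lt_of_le_of_ne (hb i).1 (Ne.symm hi0)
    have hi1' : u i < 1 := lt_of_le_of_ne (hb i).2 hi1
    have hj0' : 0 < u j := lt_of_le_of_ne (hb j).1 (Ne.symm hj0)
    have hj1' : u j < 1 := lt_of_le_of_ne (hb j).2 hj1
    set ε := min (min (u i) (1 - u i)) (min (u j) (1 - u j)) with hεdef
    have hεpos : 0 < ε := lt_min (lt_min hi0' (by linarith)) (lt_min hj0' (by linarith))
    have hε0 : ε ≤ u i := le_trans (min_le_left _ _) (min_le_left _ _)
    have hε1 : ε ≤ 1 - u i := le_trans (min_le_left _ _) (min_le_right _ _)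
    have hε2 : ε ≤ u j := le_trans (min_le_right _ _) (min_le_left _ _)
    have hε3 : ε ≤ 1 - u j := le_trans (min_le_right _ _) (min_le_right _ _)
    set d : Fin T → ℝ := Pi.single i 1 - Pi.single j 1 with hd
    have hdval : ∀ t, d t = (if t = i then (1 : ℝ) else 0) - (if t = j then 1 else 0) := by
      intro t
      rw [hd, Pi.sub_apply, hsingle i t, hsingle j t]
    have hsumd : ∑ t, d t = 0 := by
      rw [hd]
      simp only [Pi.sub_apply, Finset.sum_sub_distrib]
      rw [Fintype.sum_pi_single' i (1 : ℝ), Fintype.sum_pi_single' j (1 : ℝ)]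
      ring
    have hbound : ∀ (σ : ℝ), σ = 1 ∨ σ = -1 → (u + (σ * ε) • d) ∈ FSet T el eu := by
      intro σ hσ
      have habs : σ * σ = 1 := by rcases hσ with h | h <;> rw [h] <;> ring
      refine ⟨fun t => ?_, ?_, ?_⟩
      · have hc : (u + (σ * ε) • d) t = u t + σ * ε * d t := by simp
        rw [hc, hdval t]
        rcases eq_or_ne t i with rfl | hti
        · rw [if_pos rfl, if_neg hij]
          rcases hσ with h | h <;> rw [h] <;> constructor <;> nlinarith
        · rw [if_neg hti]
          rcases eq_or_ne t j with rfl | htj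
          · rw [if_pos rfl]
            rcases hσ with h | h <;> rw [h] <;> constructor <;> nlinarith [(hb t).1, (hb t).2]
          · rw [if_neg htj]
            simpa using hb t
      · have : ∑ t, (u + (σ * ε) • d) t = ∑ t, u t + σ * ε * ∑ t, d t := by
          simp [Finset.sum_add_distrib, Finset.mul_sum]
        rw [this, hsumd]; simpa using hsl
      · have : ∑ t, (u + (σ * ε) • d) t = ∑ t, u t + σ * ε * ∑ t, d t := by
          simp [Finset.sum_add_distrib, Finset.mul_sum]
        rw [this, hsumd]; simpa using hsu
    have hx := hbound 1 (Or.inl rfl)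
    have hy := hbound (-1) (Or.inr rfl)
    rw [one_mul] at hx
    have hy' : (u - ε • d) ∈ FSet T el eu := by
      have : u + (-1 * ε) • d = u - ε • d := by module
      rwa [this] at hy
    have hd0 := hpert d ε hεpos hx hy'
    have := congrFun hd0 i
    rw [hdval i, if_pos rfl, if_neg hij] at this
    simpa using this
  -- Claim 2: a fractional coordinate forces a tight sum
  have claim2 : ∀ i : Fin T, u i ≠ 0 → u i ≠ 1 → ∑ t, u t = el ∨ ∑ t, u t = eu := by
    intro i hi0 hi1
    by_contra hcon
    push_neg at hcon
    have hsl' : el < ∑ t, u t := lt_of_le_of_ne hsl (Ne.symm hcon.1)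
    have hsu' : ∑ t, u t < eu := lt_of_le_of_ne hsu hcon.2
    have hi0' : 0 < u i := lt_of_le_of_ne (hb i).1 (Ne.symm hi0)
    have hi1' : u i < 1 := lt_of_le_of_ne (hb i).2 hi1
    set ε := min (min (u i) (1 - u i)) (min (∑ t, u t - el) (eu - ∑ t, u t)) with hεdef
    have hεpos : 0 < ε :=
      lt_min (lt_min hi0' (by linarith)) (lt_min (by linarith) (by linarith))
    set d : Fin T → ℝ := Pi.single i 1 with hd
    have hdval : ∀ t, d t = if t = i then (1 : ℝ) else 0 := by
      intro t
      rw [hd, hsingle i t]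
    have hsumd : ∑ t, d t = 1 := by rw [hd, Fintype.sum_pi_single' i (1 : ℝ)]
    have hbound : ∀ (σ : ℝ), σ = 1 ∨ σ = -1 → (u + (σ * ε) • d) ∈ FSet T el eu := by
      intro σ hσ
      refine ⟨fun t => ?_, ?_, ?_⟩
      · have hc : (u + (σ * ε) • d) t = u t + σ * ε * d t := by simp
        rw [hc, hdval t]
        rcases eq_or_ne t i with rfl | hti
        · rw [if_pos rfl]
          have hε1 : ε ≤ u t := le_trans (min_le_left _ _) (min_le_left _ _)
          have hε2 : ε ≤ 1 - u t := le_trans (min_le_left _ _) (min_le_right _ _)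
          rcases hσ with h | h <;> rw [h] <;> constructor <;> nlinarith
        · rw [if_neg hti]
          simpa using hb t
      · have hs : ∑ t, (u + (σ * ε) • d) t = ∑ t, u t + σ * ε * ∑ t, d t := by
          simp [Finset.sum_add_distrib, Finset.mul_sum]
        rw [hs, hsumd]
        have hε3 : ε ≤ ∑ t, u t - el := le_trans (min_le_right _ _) (min_le_left _ _)
        rcases hσ with h | h <;> rw [h] <;> nlinarith
      · have hs : ∑ t, (u + (σ * ε) • d) t = ∑ t, u t + σ * ε * ∑ t, d t := by
          simp [Finset.sum_add_distrib, Finset.mul_sum]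
        rw [hs, hsumd]
        have hε4 : ε ≤ eu - ∑ t, u t := le_trans (min_le_right _ _) (min_le_right _ _)
        rcases hσ with h | h <;> rw [h] <;> nlinarith
    have hx := hbound 1 (Or.inl rfl)
    have hy := hbound (-1) (Or.inr rfl)
    rw [one_mul] at hx
    have hy' : (u - ε • d) ∈ FSet T el eu := by
      have : u + (-1 * ε) • d = u - ε • d := by module
      rwa [this] at hy
    have hd0 := hpert d ε hεpos hx hy'
    have := congrFun hd0 i
    rw [hdval i, if_pos rfl] at this
    simpa using this
  by_cases hfrac : ∃ i0 : Fin T, u i0 ≠ 0 ∧ u i0 ≠ 1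
  · -- one fractional coordinate
    obtain ⟨i0, hi00, hi01⟩ := hfrac
    have huniq : ∀ j, j ≠ i0 → u j = 0 ∨ u j = 1 := by
      intro j hj
      by_contra hcon
      push_neg at hcon
      exact claim1 j i0 hj hcon.1 hcon.2 hi00 hi01
    have hc0 : 0 < u i0 := lt_of_le_of_ne (hb i0).1 (Ne.symm hi00)
    have hc1 : u i0 < 1 := lt_of_le_of_ne (hb i0).2 hi01
    set c := u i0 with hcdef
    set k := (univ.filter fun i => u i = 1).card with hk
    have hsum : ∑ t, u t = (k : ℝ) + c := by
      rw [← Finset.sum_erase_add univ u (Finset.mem_univ i0)]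
      have h1 : ∑ i ∈ univ.erase i0, u i
          = ((Finset.filter (fun i => u i = 1) (univ.erase i0)).card : ℝ) :=
        sum_eq_card_of_01 _ u (fun i hi => huniq i (Finset.ne_of_mem_erase hi))
      have h2 : Finset.filter (fun i => u i = 1) (univ.erase i0)
          = univ.filter fun i => u i = 1 := by
        rw [Finset.filter_erase]
        apply Finset.erase_eq_of_notMem
        intro hmem
        exact (ne_of_lt hc1) ((Finset.mem_filter.mp hmem).2)
      rw [h1, h2, ← hk]
    have hu3 : ∀ i, u i = 1 ∨ u i = c ∨ u i = 0 := by
      intro i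
      rcases eq_or_ne i i0 with rfl | h
      · exact Or.inr (Or.inl rfl)
      · rcases huniq i h with h' | h'
        · exact Or.inr (Or.inr h')
        · exact Or.inl h'
    have hucc : (univ.filter fun i => u i = c).card = 1 := by
      have : (univ.filter fun i => u i = c) = {i0} := by
        ext i
        simp only [Finset.mem_filter, Finset.mem_univ, true_and, Finset.mem_singleton]
        constructor
        · intro h
          by_contra hne
          rcases huniq i hne with h' | h' <;> rw [h'] at h
          · exact absurd h.symm (ne_of_gt hc0)
          · exact absurd h.symm (ne_of_lt hc1)
        · intro h; rw [h]
      rw [this, Finset.card_singleton]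
    rcases claim2 i0 hi00 hi01 with hS | hS
    · -- sum equals el
      have hel : el = (k : ℝ) + c := by rw [← hS, hsum]
      have hkT : k < T := by
        have : (k : ℝ) < (T : ℝ) := by linarith
        exact_mod_cast this
      obtain ⟨hw3, hwc1, hwcc⟩ := fiber_vProf T el k c hc0 hc1 hel hkT
      have hw0 : wVert T el eu 0 = vProf T 1 el := by
        funext s
        unfold wVert
        rw [if_pos (show ((0 : Fin (T + 1)) : ℕ) ≤ (s : ℕ) by simp)]
      have hcount := count_eq_of_three 1 c 0 (ne_of_gt hc1) (by norm_num) (ne_of_gt hc0)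
        u (vProf T 1 el) hu3 hw3 (by rw [hwc1]) (by rw [hucc, hwcc])
      obtain ⟨π, hπ⟩ := exists_perm_of_count_eq u (vProf T 1 el) hcount
      refine ⟨0, π, ?_⟩
      rw [hw0]
      exact hπ
    · -- sum equals eu
      have heu' : eu = (k : ℝ) + c := by rw [← hS, hsum]
      have hkT : k < T := by
        have : (k : ℝ) < (T : ℝ) := by linarith
        exact_mod_cast this
      obtain ⟨hw3, hwc1, hwcc⟩ := fiber_vProf T eu k c hc0 hc1 heu' hkT
      have hw0 : wVert T el eu (Fin.last T) = vProf T 1 eu := by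
        funext s
        unfold wVert
        rw [if_neg]
        intro hmem
        have := s.isLt
        simp only [Fin.val_last] at hmem
        omega
      have hcount := count_eq_of_three 1 c 0 (ne_of_gt hc1) (by norm_num) (ne_of_gt hc0)
        u (vProf T 1 eu) hu3 hw3 (by rw [hwc1]) (by rw [hucc, hwcc])
      obtain ⟨π, hπ⟩ := exists_perm_of_count_eq u (vProf T 1 eu) hcount
      refine ⟨Fin.last T, π, ?_⟩
      rw [hw0]
      exact hπ
  · -- all coordinates 0/1
    push_neg at hfrac
    have hdi : ∀ i, u i = 0 ∨ u i = 1 := by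
      intro i
      by_cases h : u i = 0
      · exact Or.inl h
      · exact Or.inr (hfrac i h)
    set k := (univ.filter fun i => u i = 1).card with hk
    have hsum : ∑ t, u t = (k : ℝ) := by
      rw [sum_eq_card_of_01 univ u (fun i _ => hdi i)]
    have hlk : el ≤ (k : ℝ) := by rw [← hsum]; exact hsl
    have hku : (k : ℝ) ≤ eu := by rw [← hsum]; exact hsu
    have hkT : k ≤ T := by
      calc k ≤ univ.card := Finset.card_filter_le _ _
        _ = T := by rw [Finset.card_univ, Fintype.card_fin]
    have hkT1 : k < T + 1 := by omega
    have hwind := wVert_indicator T el eu h0 hle k hkT1 hlk hku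
    have hw01 : ∀ s, wVert T el eu ⟨k, hkT1⟩ s = 1 ∨ wVert T el eu ⟨k, hkT1⟩ s = 2 ∨
        wVert T el eu ⟨k, hkT1⟩ s = 0 := by
      intro s
      rw [hwind s]
      split
      · exact Or.inl rfl
      · exact Or.inr (Or.inr rfl)
    have hu01 : ∀ i, u i = 1 ∨ u i = 2 ∨ u i = 0 := by
      intro i
      rcases hdi i with h | h
      · exact Or.inr (Or.inr h)
      · exact Or.inl h
    have hcard1 : (univ.filter fun s => wVert T el eu ⟨k, hkT1⟩ s = 1).card = k := by
      have heqf : (univ.filter fun s => wVert T el eu ⟨k, hkT1⟩ s = 1)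
          = (univ.filter fun s : Fin T => (s : ℕ) < k) := by
        apply Finset.filter_congr
        intro s _
        rw [hwind s]
        by_cases h : (s : ℕ) < k
        · simp [h]
        · simp [h]
      rw [heqf, card_filter_lt T k hkT]
    have hcard2u : (univ.filter fun i => u i = 2).card = 0 := by
      rw [Finset.card_eq_zero, Finset.filter_eq_empty_iff]
      intro i _
      rcases hdi i with h | h <;> rw [h] <;> norm_num
    have hcard2w : (univ.filter fun s => wVert T el eu ⟨k, hkT1⟩ s = 2).card = 0 := by
      rw [Finset.card_eq_zero, Finset.filter_eq_empty_iff]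
      intro s _
      rw [hwind s]
      split <;> norm_num
    have hcount := count_eq_of_three 1 2 0 (by norm_num) (by norm_num) (by norm_num)
      u (wVert T el eu ⟨k, hkT1⟩) hu01 hw01 (by rw [hcard1])
      (by rw [hcard2u, hcard2w])
    obtain ⟨π, hπ⟩ := exists_perm_of_count_eq u (wVert T el eu ⟨k, hkT1⟩) hcount
    exact ⟨⟨k, hkT1⟩, π, hπ⟩

theorem flexSet_eq_convexHull_wVert (T : ℕ) (el eu : ℝ)
    (h0 : 0 ≤ el) (hle : el ≤ eu) (heu : eu ≤ (T : ℝ)) :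
    {u : Fin T → ℝ | (∀ t, 0 ≤ u t ∧ u t ≤ 1) ∧ el ≤ ∑ t, u t ∧ ∑ t, u t ≤ eu} =
      convexHull ℝ {y | ∃ (t : Fin (T + 1)) (π : Equiv.Perm (Fin T)),
        y = (wVert T el eu t) ∘ π} := by
  classical
  have h0u : (0 : ℝ) ≤ eu := le_trans h0 hle
  have hFeq : {u : Fin T → ℝ | (∀ t, 0 ≤ u t ∧ u t ≤ 1) ∧ el ≤ ∑ t, u t ∧ ∑ t, u t ≤ eu}
      = FSet T el eu := rfl
  rw [hFeq]
  set G : Set (Fin T → ℝ) := {y | ∃ (t : Fin (T + 1)) (π : Equiv.Perm (Fin T)),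
    y = (wVert T el eu t) ∘ π} with hG
  have hGF : G ⊆ FSet T el eu := by
    rintro y ⟨t, π, rfl⟩
    refine ⟨fun s => ⟨wVert_nonneg T el eu h0 h0u t (π s),
      wVert_le_one T el eu h0 h0u t (π s)⟩, ?_, ?_⟩
    · have hcomp : ∑ s, wVert T el eu t (π s) = ∑ s, wVert T el eu t s :=
        Equiv.sum_comp π _
      rw [show (∑ s, (wVert T el eu t ∘ π) s) = ∑ s, wVert T el eu t (π s) from rfl, hcomp]
      exact sum_wVert_ge T el eu h0 hle heu t
    · have hcomp : ∑ s, wVert T el eu t (π s) = ∑ s, wVert T el eu t s :=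
        Equiv.sum_comp π _
      rw [show (∑ s, (wVert T el eu t ∘ π) s) = ∑ s, wVert T el eu t (π s) from rfl, hcomp]
      exact sum_wVert_le T el eu h0 hle heu t
  have hGfin : G.Finite := by
    have hR : G = Set.range
        (fun p : Fin (T + 1) × Equiv.Perm (Fin T) => wVert T el eu p.1 ∘ p.2) := by
      ext y
      constructor
      · rintro ⟨t, π, rfl⟩; exact ⟨(t, π), rfl⟩
      · rintro ⟨⟨t, π⟩, rfl⟩; exact ⟨t, π, rfl⟩
    rw [hR]
    exact Set.finite_range _
  apply Set.Subset.antisymm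
  · intro u hu
    have h1 : FSet T el eu = closure (convexHull ℝ ((FSet T el eu).extremePoints ℝ)) :=
      (closure_convexHull_extremePoints (isCompact_FSet T el eu) (convex_FSet T el eu)).symm
    have h2 : u ∈ closure (convexHull ℝ ((FSet T el eu).extremePoints ℝ)) := h1 ▸ hu
    have h3 : closure (convexHull ℝ ((FSet T el eu).extremePoints ℝ))
        ⊆ closure (convexHull ℝ G) :=
      closure_mono (convexHull_mono (extremePoints_FSet_subset T el eu h0 hle heu))
    have h4 : closure (convexHull ℝ G) = convexHull ℝ G :=
      IsClosed.closure_eq (hGfin.isClosed_convexHull ℝ)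
    exact h4 ▸ (h3 h2)
  · exact convexHull_min hGF (convex_FSet T el eu)
end

section
/- The aggregate (Minkowski-sum) flexibility set of N EVs with energy intervals [ē^lower_i, ē^upper_i] equals {u ∈ ℝ^T : ∑ ē^lower_i ≤ ∑_t u_t ≤ ∑ ē^upper_i, and u is 'inter-majorized' between ν_lower = ∑_i v(ē^lower_i) and ν_upper = ∑_i v(ē^upper_i)}; in particular it equals the convex hull of the T+1 permutahedra Π(μ_t), where μ_{t,s} = (ν_lower)_s for t < s and (ν_upper)_s for t ≥ s. -/
open Finset

/-- Vertex generators `μ_t` built from lower/upper aggregate profiles. -/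
noncomputable def muVert (T : ℕ) (νl νu : Fin T → ℝ) (t : Fin (T + 1)) : Fin T → ℝ :=
  fun s => if (t : ℕ) ≤ (s : ℕ) then νl s else νu s


noncomputable def clamp (x : ℝ) : ℝ := min 1 (max 0 x)

lemma clamp_nonneg (x : ℝ) : 0 ≤ clamp x := le_min one_pos.le (le_max_left _ _)
lemma clamp_le_one (x : ℝ) : clamp x ≤ 1 := min_le_left _ _
lemma clamp_of_one_le {x : ℝ} (h : 1 ≤ x) : clamp x = 1 :=
  min_eq_left (le_max_of_le_right h)
lemma clamp_of_nonpos {x : ℝ} (h : x ≤ 0) : clamp x = 0 := by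
  unfold clamp; rw [max_eq_left h]; exact min_eq_right one_pos.le
lemma clamp_mono : Monotone clamp := fun a b hab =>
  min_le_min le_rfl (max_le_max le_rfl hab)


lemma vProf_one {T : ℕ} (e : ℝ) (t : Fin T) :
    vProf T 1 e t = clamp (e - (t : ℕ)) := by
  unfold vProf
  rw [div_one]
  rcases lt_trichotomy ((t : ℕ) : ℤ) ⌊e⌋ with hlt | heq | hgt
  · rw [if_pos hlt]
    have h1 : ((t : ℕ) : ℝ) + 1 ≤ (⌊e⌋ : ℝ) := by exact_mod_cast Int.add_one_le_of_lt hlt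
    have h2 : (⌊e⌋ : ℝ) ≤ e := Int.floor_le e
    rw [clamp_of_one_le (by linarith)]
  · rw [if_neg (by omega), if_pos heq]
    have h1 : 0 ≤ e - (⌊e⌋ : ℝ) := by linarith [Int.floor_le e]
    have h2 : e - (⌊e⌋ : ℝ) < 1 := by linarith [Int.lt_floor_add_one e]
    have : ((t : ℕ) : ℝ) = (⌊e⌋ : ℝ) := by exact_mod_cast heq
    unfold clamp
    rw [this, max_eq_right h1, min_eq_right (by linarith), one_mul]
  · rw [if_neg (by omega), if_neg (by omega)]
    have h1 : (⌊e⌋ : ℝ) + 1 ≤ ((t : ℕ) : ℝ) := by exact_mod_cast Int.add_one_le_of_lt hgt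
    have h2 : e < (⌊e⌋ : ℝ) + 1 := Int.lt_floor_add_one e
    rw [clamp_of_nonpos (by linarith)]

lemma sum_clamp (e : ℝ) (he : 0 ≤ e) (s : ℕ) :
    ∑ r ∈ Finset.range s, clamp (e - (r : ℕ)) = min (s : ℝ) e := by
  induction s with
  | zero => simp [min_eq_left he]
  | succ n ih =>
    rw [Finset.sum_range_succ, ih]
    rcases le_or_gt e n with hle | hgt
    · rw [min_eq_right hle, clamp_of_nonpos (by linarith), add_zero,
        min_eq_right (by push_cast; linarith)]
    · rw [min_eq_left hgt.le]
      rcases le_or_gt ((n : ℝ) + 1) e with h1 | h1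
      · rw [clamp_of_one_le (by linarith), min_eq_left (by push_cast; linarith)]
        push_cast; ring
      · have : clamp (e - n) = e - n := by
          unfold clamp
          rw [max_eq_right (by linarith), min_eq_right (by linarith)]
        rw [this, min_eq_right (by push_cast; linarith)]
        ring


lemma inner_le_of_psum (n : ℕ) (d g : ℕ → ℝ) (hd0 : ∀ s, 0 ≤ d s)
    (hdm : ∀ s, d (s + 1) ≤ d s) (hg : ∀ s ≤ n, ∑ r ∈ range s, g r ≤ 0) :
    ∑ s ∈ range n, d s * g s ≤ 0 := by
  induction n generalizing d with
  | zero => simp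
  | succ n ih =>
    have hAnti : Antitone d := antitone_nat_of_succ_le hdm
    set d' : ℕ → ℝ := fun s => d (min s n) - d n with hd'
    have h1 : ∑ s ∈ range n, d' s * g s ≤ 0 := by
      refine ih d' (fun s => sub_nonneg.2 (hAnti (min_le_right s n)))
        (fun s => sub_le_sub_right (hAnti (min_le_min (Nat.le_succ s) le_rfl)) _)
        (fun s hs => hg s (le_trans hs (Nat.le_succ n)))
    have key : ∑ s ∈ range (n+1), d s * g s
        = ∑ s ∈ range n, d' s * g s + d n * ∑ s ∈ range (n+1), g s := by
      rw [Finset.sum_range_succ, Finset.mul_sum, Finset.sum_range_succ]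
      have : ∀ s ∈ range n, d s * g s = d' s * g s + d n * g s := by
        intro s hs
        have : min s n = s := min_eq_left (Nat.le_of_lt (Finset.mem_range.1 hs))
        simp only [hd', this]; ring
      rw [Finset.sum_congr rfl this, Finset.sum_add_distrib]
      ring
    rw [key]
    have h2 : d n * ∑ s ∈ range (n+1), g s ≤ 0 :=
      mul_nonpos_of_nonneg_of_nonpos (hd0 n) (hg (n+1) le_rfl)
    linarith

lemma sum_rev (T s : ℕ) (hs : s ≤ T) (F : ℕ → ℝ) :
    ∑ r ∈ range s, (if r < T then F (T - 1 - r) else 0)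
      = ∑ j ∈ Finset.Ico (T - s) T, F j := by
  have h1 : ∑ r ∈ range s, (if r < T then F (T - 1 - r) else 0)
      = ∑ r ∈ range s, F (T - 1 - r) := by
    refine Finset.sum_congr rfl fun r hr => ?_
    rw [if_pos (lt_of_lt_of_le (Finset.mem_range.1 hr) hs)]
  rw [h1]
  refine Finset.sum_nbij' (fun r => T - 1 - r) (fun j => T - 1 - j) ?_ ?_ ?_ ?_ ?_
  · intro a ha
    have := Finset.mem_range.1 ha
    simp only [Finset.mem_Ico]; omega
  · intro a ha
    have := Finset.mem_Ico.1 ha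
    simp only [Finset.mem_range]; omega
  · intro a ha; have := Finset.mem_range.1 ha; omega
  · intro a ha; have := Finset.mem_Ico.1 ha; omega
  · intro a _; rfl

lemma key_ineq (T tstar : ℕ) (htT : tstar ≤ T) (d w : ℕ → ℝ) (el eu : ℝ)
    (hel : 0 ≤ el) (hleu : el ≤ eu) (heuT : eu ≤ (T : ℝ))
    (hdm : ∀ s, s + 1 < T → d (s + 1) ≤ d s)
    (hdp : ∀ s, s < tstar → 0 ≤ d s)
    (hdn : ∀ s, tstar ≤ s → s < T → d s ≤ 0)
    (hw0 : ∀ s, s < T → 0 ≤ w s) (hw1 : ∀ s, s < T → w s ≤ 1)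
    (hwl : el ≤ ∑ s ∈ range T, w s) (hwu : ∑ s ∈ range T, w s ≤ eu) :
    ∑ s ∈ range T, d s * w s ≤
      ∑ s ∈ range T, d s * (if s < tstar then clamp (eu - (s : ℕ)) else clamp (el - (s : ℕ))) := by
  have heu0 : 0 ≤ eu := le_trans hel hleu
  -- partial sums of w bounded above
  have psum_w_le : ∀ s, s ≤ T → ∑ r ∈ range s, w r ≤ min (s : ℝ) eu := by
    intro s hs
    refine le_min ?_ ?_
    · calc ∑ r ∈ range s, w r ≤ ∑ r ∈ range s, (1 : ℝ) :=
            Finset.sum_le_sum (fun r hr => hw1 r (lt_of_lt_of_le (Finset.mem_range.1 hr) hs))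
        _ = (s : ℝ) := by simp
    · calc ∑ r ∈ range s, w r ≤ ∑ r ∈ range T, w r :=
            Finset.sum_le_sum_of_subset_of_nonneg
              (Finset.range_subset_range.2 hs)
              (fun r hr _ => hw0 r (Finset.mem_range.1 hr))
        _ ≤ eu := hwu
  -- tail sums of w bounded below
  have tail_w_ge : ∀ k, k ≤ T → el - min (k : ℝ) el ≤ ∑ r ∈ Finset.Ico k T, w r := by
    intro k hk
    have hsplit : ∑ r ∈ range k, w r + ∑ r ∈ Finset.Ico k T, w r = ∑ r ∈ range T, w r := by
      rw [Finset.range_eq_Ico, Finset.range_eq_Ico]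
      exact Finset.sum_Ico_consecutive _ (Nat.zero_le k) hk
    have hhead : ∑ r ∈ range k, w r ≤ min (k : ℝ) eu := psum_w_le k hk
    rcases le_or_gt el (k : ℝ) with hcase | hcase
    · rw [min_eq_right hcase]
      have : 0 ≤ ∑ r ∈ Finset.Ico k T, w r :=
        Finset.sum_nonneg (fun r hr => hw0 r (Finset.mem_Ico.1 hr).2)
      linarith
    · rw [min_eq_left hcase.le]
      have hk' : ∑ r ∈ range k, w r ≤ (k : ℝ) := le_trans hhead (min_le_left _ _)
      linarith
  set dplus : ℕ → ℝ := fun s => if s < tstar then d s else 0 with hdplus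
  set dminus : ℕ → ℝ := fun s => if s < tstar then 0 else -(d s) with hdminus
  -- part 1
  have h1 : ∑ s ∈ range T, dplus s * (w s - clamp (eu - (s : ℕ))) ≤ 0 := by
    refine inner_le_of_psum T dplus _ ?_ ?_ ?_
    · intro s
      simp only [hdplus]
      split_ifs with hlt
      · exact hdp s hlt
      · exact le_rfl
    · intro s
      simp only [hdplus]
      by_cases hB : s < tstar
      · by_cases hA : s + 1 < tstar
        · rw [if_pos hA, if_pos hB]; exact hdm s (lt_of_lt_of_le hA htT)
        · rw [if_neg hA, if_pos hB]; exact hdp s hB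
      · rw [if_neg (by omega), if_neg hB]
    · intro s hs
      rw [Finset.sum_sub_distrib, sum_clamp eu heu0 s]
      have := psum_w_le s hs
      linarith
  -- part 2 (reversed)
  have h2 : ∑ s ∈ range T,
      (if s < T then dminus (T - 1 - s) else 0) *
      (if s < T then clamp (el - ((T - 1 - s : ℕ) : ℝ)) - w (T - 1 - s) else 0) ≤ 0 := by
    refine inner_le_of_psum T _ _ ?_ ?_ ?_
    · intro s
      split_ifs with hsT
      · simp only [hdminus]
        split_ifs with hc
        · exact le_rfl
        · have := hdn (T - 1 - s) (by omega) (by omega)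
          linarith
      · exact le_rfl
    · intro s
      rcases lt_or_ge (s + 1) T with hs1 | hs1
      · have hsT : s < T := by omega
        rw [if_pos hs1, if_pos hsT]
        simp only [hdminus]
        have ha : T - 1 - s = (T - 1 - (s + 1)) + 1 := by omega
        set a := T - 1 - (s + 1) with hadef
        rw [ha]
        split_ifs with hc1 hc2 hc2
        · exact le_rfl
        · have := hdn (a + 1) (by omega) (by omega)
          linarith
        · omega
        · have := hdm a (by omega)
          linarith
      · rw [if_neg (by omega)]
        split_ifs with hsT
        · simp only [hdminus, zero_mul]
          split_ifs with hc
          · exact le_rfl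
          · have := hdn (T - 1 - s) (by omega) (by omega)
            linarith
        · exact le_rfl
    · intro s hs
      have : ∑ r ∈ range s,
          (if r < T then clamp (el - ((T - 1 - r : ℕ) : ℝ)) - w (T - 1 - r) else 0)
          = ∑ j ∈ Finset.Ico (T - s) T, (clamp (el - (j : ℕ)) - w j) :=
        sum_rev T s hs (fun j => clamp (el - (j : ℝ)) - w j)
      rw [this, Finset.sum_sub_distrib]
      have hk : T - s ≤ T := by omega
      have htail : ∑ j ∈ Finset.Ico (T - s) T, clamp (el - (j : ℕ))
          = el - min ((T - s : ℕ) : ℝ) el := by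
        have hsplit : ∑ r ∈ range (T - s), clamp (el - (r : ℕ))
            + ∑ r ∈ Finset.Ico (T - s) T, clamp (el - (r : ℕ))
            = ∑ r ∈ range T, clamp (el - (r : ℕ)) := by
          rw [Finset.range_eq_Ico, Finset.range_eq_Ico]
          exact Finset.sum_Ico_consecutive _ (Nat.zero_le _) hk
        rw [sum_clamp el hel, sum_clamp el hel, min_eq_right (hleu.trans heuT)] at hsplit
        linarith
      rw [htail]
      have := tail_w_ge (T - s) hk
      linarith
  -- rewrite h2 via reflection
  have hrev : ∑ s ∈ range T,
      (if s < T then dminus (T - 1 - s) else 0) *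
      (if s < T then clamp (el - ((T - 1 - s : ℕ) : ℝ)) - w (T - 1 - s) else 0)
      = ∑ s ∈ range T, dminus s * (clamp (el - (s : ℕ)) - w s) := by
    calc ∑ s ∈ range T,
        (if s < T then dminus (T - 1 - s) else 0) *
        (if s < T then clamp (el - ((T - 1 - s : ℕ) : ℝ)) - w (T - 1 - s) else 0)
        = ∑ s ∈ range T, (fun j => dminus j * (clamp (el - ((j : ℕ) : ℝ)) - w j)) (T - 1 - s) := by
          refine Finset.sum_congr rfl fun s hs => ?_
          rw [if_pos (Finset.mem_range.1 hs), if_pos (Finset.mem_range.1 hs)]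
      _ = ∑ s ∈ range T, dminus s * (clamp (el - (s : ℕ)) - w s) :=
          Finset.sum_range_reflect (fun j => dminus j * (clamp (el - (j : ℝ)) - w j)) T
  rw [hrev] at h2
  -- combine
  have idw : ∀ s ∈ range T, d s * w s = dplus s * w s - dminus s * w s := by
    intro s _
    simp only [hdplus, hdminus]
    split_ifs <;> ring
  have idm : ∀ s ∈ range T,
      d s * (if s < tstar then clamp (eu - (s : ℕ)) else clamp (el - (s : ℕ)))
      = dplus s * clamp (eu - (s : ℕ)) - dminus s * clamp (el - (s : ℕ)) := by
    intro s _
    simp only [hdplus, hdminus]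
    split_ifs <;> ring
  have expand1 : ∑ s ∈ range T, dplus s * (w s - clamp (eu - (s : ℕ)))
      = ∑ s ∈ range T, dplus s * w s - ∑ s ∈ range T, dplus s * clamp (eu - (s : ℕ)) := by
    rw [← Finset.sum_sub_distrib]
    exact Finset.sum_congr rfl fun s _ => by ring
  have expand2 : ∑ s ∈ range T, dminus s * (clamp (el - (s : ℕ)) - w s)
      = ∑ s ∈ range T, dminus s * clamp (el - (s : ℕ)) - ∑ s ∈ range T, dminus s * w s := by
    rw [← Finset.sum_sub_distrib]
    exact Finset.sum_congr rfl fun s _ => by ring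
  rw [expand1] at h1
  rw [expand2] at h2
  rw [Finset.sum_congr rfl idw, Finset.sum_congr rfl idm,
    Finset.sum_sub_distrib, Finset.sum_sub_distrib]
  linarith


lemma exists_sorted (T : ℕ) (c : Fin T → ℝ) :
    ∃ (σ : Equiv.Perm (Fin T)) (tstar : ℕ), tstar ≤ T ∧
      (∀ s t : Fin T, s ≤ t → c (σ t) ≤ c (σ s)) ∧
      (∀ s : Fin T, (s : ℕ) < tstar → 0 ≤ c (σ s)) ∧
      (∀ s : Fin T, tstar ≤ (s : ℕ) → c (σ s) ≤ 0) := by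
  set σ := Tuple.sort (fun i => -(c i)) with hσ
  have hm : Monotone ((fun i => -(c i)) ∘ σ) := Tuple.monotone_sort _
  have hanti : ∀ s t : Fin T, s ≤ t → c (σ t) ≤ c (σ s) := by
    intro s t hst
    have := hm hst
    simpa using this
  set P := Finset.univ.filter (fun s : Fin T => 0 < c (σ s)) with hP
  refine ⟨σ, P.card, ?_, hanti, ?_, ?_⟩
  · calc P.card ≤ Finset.univ.card := Finset.card_le_card (Finset.filter_subset _ _)
      _ = T := by simp
  · intro s hs
    by_contra hcon
    push_neg at hcon
    have hsub : P ⊆ Finset.Iio s := by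
      intro x hx
      rw [Finset.mem_Iio]
      by_contra hxs
      push_neg at hxs
      have h1 := hanti s x hxs
      have h2 := (Finset.mem_filter.1 hx).2
      linarith
    have hcard := Finset.card_le_card hsub
    rw [Fin.card_Iio] at hcard
    omega
  · intro s hs
    by_contra hcon
    push_neg at hcon
    have hsub : Finset.Iic s ⊆ P := by
      intro x hx
      refine Finset.mem_filter.2 ⟨Finset.mem_univ _, ?_⟩
      exact lt_of_lt_of_le hcon (hanti x s (Finset.mem_Iic.1 hx))
    have hcard := Finset.card_le_card hsub
    rw [Fin.card_Iic] at hcard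
    omega

open Pointwise in
lemma mem_finsetSum {ι α : Type*} [AddCommMonoid α] (s : Finset ι)
    (F : ι → Set α) (f : ι → α) (hf : ∀ i ∈ s, f i ∈ F i) :
    ∑ i ∈ s, f i ∈ ∑ i ∈ s, F i := by
  classical
  induction s using Finset.cons_induction with
  | empty => simp
  | cons a s ha ih =>
    rw [Finset.sum_cons, Finset.sum_cons]
    exact Set.add_mem_add (hf a (Finset.mem_cons_self a s))
      (ih fun i hi => hf i (Finset.mem_cons_of_mem hi))

open Pointwise in
lemma eq_sum_of_mem_finsetSum {ι α : Type*} [AddCommMonoid α] (s : Finset ι)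
    (F : ι → Set α) : ∀ u : α, u ∈ ∑ i ∈ s, F i →
    ∃ f : ι → α, (∀ i ∈ s, f i ∈ F i) ∧ ∑ i ∈ s, f i = u := by
  classical
  induction s using Finset.cons_induction with
  | empty =>
    intro u hu
    refine ⟨fun _ => 0, by simp, ?_⟩
    simp only [Finset.sum_empty]
    simpa using hu.symm
  | cons a s ha ih =>
    intro u hu
    rw [Finset.sum_cons] at hu
    obtain ⟨x, hx, y, hy, hxy⟩ := Set.mem_add.1 hu
    obtain ⟨f, hf, hsum⟩ := ih y hy
    refine ⟨Function.update f a x, ?_, ?_⟩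
    · intro i hi
      rcases Finset.mem_cons.1 hi with rfl | hi'
      · rw [Function.update_self]; exact hx
      · rw [Function.update_of_ne (by rintro rfl; exact ha hi')]
        exact hf i hi'
    · rw [Finset.sum_cons, Function.update_self]
      have : ∑ i ∈ s, Function.update f a x i = ∑ i ∈ s, f i := by
        refine Finset.sum_congr rfl fun i hi => ?_
        exact Function.update_of_ne (by rintro rfl; exact ha hi) _ _
      rw [this, hsum, hxy]

open Pointwise in
lemma convex_finsetSum {ι E : Type*} [AddCommGroup E] [Module ℝ E] (s : Finset ι)
    (F : ι → Set E) (h : ∀ i, Convex ℝ (F i)) : Convex ℝ (∑ i ∈ s, F i) := by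
  classical
  induction s using Finset.cons_induction with
  | empty =>
    simp only [Finset.sum_empty]
    have : (0 : Set E) = {0} := rfl
    rw [this]
    exact convex_singleton 0
  | cons a s ha ih =>
    rw [Finset.sum_cons]
    exact (h a).add ih

lemma convex_F (T : ℕ) (a b : ℝ) :
    Convex ℝ {u : Fin T → ℝ | (∀ t, 0 ≤ u t ∧ u t ≤ 1) ∧ a ≤ ∑ t, u t ∧ ∑ t, u t ≤ b} := by
  intro x hx y hy p q hp hq hpq
  obtain ⟨hx1, hx2, hx3⟩ := hx
  obtain ⟨hy1, hy2, hy3⟩ := hy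
  have hsum : ∑ t, (p • x + q • y) t = p * ∑ t, x t + q * ∑ t, y t := by
    simp only [Pi.add_apply, Pi.smul_apply, smul_eq_mul]
    rw [Finset.sum_add_distrib, ← Finset.mul_sum, ← Finset.mul_sum]
  refine ⟨fun t => ?_, ?_, ?_⟩
  · simp only [Pi.add_apply, Pi.smul_apply, smul_eq_mul]
    constructor
    · have := (hx1 t).1; have := (hy1 t).1
      positivity
    · have h1 := (hx1 t).2; have h2 := (hy1 t).2
      have := (hx1 t).1; have := (hy1 t).1
      nlinarith
  · rw [hsum]
    calc a = p * a + q * a := by rw [← add_mul, hpq, one_mul]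
      _ ≤ p * ∑ t, x t + q * ∑ t, y t :=
          add_le_add (mul_le_mul_of_nonneg_left hx2 hp) (mul_le_mul_of_nonneg_left hy2 hq)
  · rw [hsum]
    calc p * ∑ t, x t + q * ∑ t, y t ≤ p * b + q * b :=
          add_le_add (mul_le_mul_of_nonneg_left hx3 hp) (mul_le_mul_of_nonneg_left hy3 hq)
      _ = b := by rw [← add_mul, hpq, one_mul]

open Pointwise in
theorem aggregate_flexSet_eq_convexHull (T N : ℕ)
    (el eu : Fin N → ℝ) (h : ∀ i, 0 ≤ el i ∧ el i ≤ eu i ∧ eu i ≤ (T : ℝ)) :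
    (∑ i : Fin N, {u : Fin T → ℝ | (∀ t, 0 ≤ u t ∧ u t ≤ 1) ∧
        el i ≤ ∑ t, u t ∧ ∑ t, u t ≤ eu i}) =
      convexHull ℝ {y | ∃ (t : Fin (T + 1)) (π : Equiv.Perm (Fin T)),
        y = (muVert T (∑ i, vProf T 1 (el i)) (∑ i, vProf T 1 (eu i)) t) ∘ π} := by
  have hel0 : ∀ i, 0 ≤ el i := fun i => (h i).1
  have hleu : ∀ i, el i ≤ eu i := fun i => (h i).2.1
  have heuT : ∀ i, eu i ≤ (T : ℝ) := fun i => (h i).2.2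
  have helT : ∀ i, el i ≤ (T : ℝ) := fun i => le_trans (hleu i) (heuT i)
  have heu0 : ∀ i, 0 ≤ eu i := fun i => le_trans (hel0 i) (hleu i)
  apply Set.Subset.antisymm
  · -- LHS ⊆ RHS
    intro u hu
    by_contra hno
    obtain ⟨g, hg, hgsum⟩ := eq_sum_of_mem_finsetSum Finset.univ _ u hu
    set Gen : Set (Fin T → ℝ) := {y | ∃ (t : Fin (T + 1)) (π : Equiv.Perm (Fin T)),
        y = (muVert T (∑ i, vProf T 1 (el i)) (∑ i, vProf T 1 (eu i)) t) ∘ π} with hGen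
    have hGfin : Gen.Finite := by
      refine Set.Finite.subset (Set.finite_range
        (fun p : Fin (T + 1) × Equiv.Perm (Fin T) =>
          (muVert T (∑ i, vProf T 1 (el i)) (∑ i, vProf T 1 (eu i)) p.1) ∘ p.2)) ?_
      rintro y ⟨t, π, rfl⟩
      exact ⟨(t, π), rfl⟩
    have hclosed : IsClosed (convexHull ℝ Gen) := (hGfin.isCompact_convexHull (𝕜 := ℝ)).isClosed
    obtain ⟨φ, α, hlt, hgt⟩ :=
      geometric_hahn_banach_closed_point (convex_convexHull ℝ Gen) hclosed hno
    set c : Fin T → ℝ := fun s => φ (fun j => if s = j then (1 : ℝ) else 0) with hc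
    have hφ : ∀ x : Fin T → ℝ, φ x = ∑ s, c s * x s := by
      intro x
      conv_lhs => rw [pi_eq_sum_univ x]
      rw [map_sum]
      refine Finset.sum_congr rfl fun s _ => ?_
      rw [map_smul]
      simp [hc, mul_comm]
    obtain ⟨σ, tstar, htT, hanti, hpos, hneg⟩ := exists_sorted T c
    set d : ℕ → ℝ := fun n => if hn : n < T then c (σ ⟨n, hn⟩) else 0 with hd
    -- per-agent inequality
    have hchain : ∀ i : Fin N, ∑ s, c s * g i s ≤
        ∑ n ∈ range T, d n * (if n < tstar then clamp (eu i - (n : ℕ))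
          else clamp (el i - (n : ℕ))) := by
      intro i
      obtain ⟨hgi1, hgi2, hgi3⟩ := hg i (Finset.mem_univ i)
      set w : ℕ → ℝ := fun n => if hn : n < T then g i (σ ⟨n, hn⟩) else 0 with hw
      have hwsum : ∑ n ∈ range T, w n = ∑ s, g i s := by
        rw [← Fin.sum_univ_eq_sum_range w T]
        rw [← Equiv.sum_comp σ (g i)]
        refine Finset.sum_congr rfl fun s _ => ?_
        simp [hw, s.isLt]
      have step1 : ∑ s, c s * g i s = ∑ n ∈ range T, d n * w n := by
        rw [← Equiv.sum_comp σ (fun s => c s * g i s)]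
        rw [← Fin.sum_univ_eq_sum_range (fun n => d n * w n) T]
        refine Finset.sum_congr rfl fun s _ => ?_
        simp [hd, hw, s.isLt]
      rw [step1]
      refine key_ineq T tstar htT d w (el i) (eu i) (hel0 i) (hleu i) (heuT i)
        ?_ ?_ ?_ ?_ ?_ ?_ ?_
      · intro n hn
        simp only [hd]
        rw [dif_pos hn, dif_pos (by omega : n < T)]
        exact hanti ⟨n, by omega⟩ ⟨n + 1, hn⟩ (by simp [Fin.le_def])
      · intro n hn
        have hnT : n < T := lt_of_lt_of_le hn htT
        simp only [hd]
        rw [dif_pos hnT]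
        exact hpos ⟨n, hnT⟩ hn
      · intro n hn hnT
        simp only [hd]
        rw [dif_pos hnT]
        exact hneg ⟨n, hnT⟩ hn
      · intro n hn
        simp only [hw]
        rw [dif_pos hn]
        exact (hgi1 _).1
      · intro n hn
        simp only [hw]
        rw [dif_pos hn]
        exact (hgi1 _).2
      · rw [hwsum]; exact hgi2
      · rw [hwsum]; exact hgi3
    -- sum over agents
    have hφu : φ u = ∑ i : Fin N, ∑ s, c s * g i s := by
      rw [hφ u, ← hgsum]
      rw [Finset.sum_comm]
      refine Finset.sum_congr rfl fun s _ => ?_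
      rw [Finset.sum_apply, Finset.mul_sum]
    have hle1 : φ u ≤ ∑ n ∈ range T, d n *
        (∑ i : Fin N, (if n < tstar then clamp (eu i - (n : ℕ))
          else clamp (el i - (n : ℕ)))) := by
      rw [hφu]
      calc ∑ i : Fin N, ∑ s, c s * g i s
          ≤ ∑ i : Fin N, ∑ n ∈ range T, d n * (if n < tstar then clamp (eu i - (n : ℕ))
              else clamp (el i - (n : ℕ))) :=
            Finset.sum_le_sum fun i _ => hchain i
        _ = ∑ n ∈ range T, d n * (∑ i : Fin N, (if n < tstar then clamp (eu i - (n : ℕ))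
              else clamp (el i - (n : ℕ)))) := by
            rw [Finset.sum_comm]
            exact Finset.sum_congr rfl fun n _ => by rw [Finset.mul_sum]
    -- the witness vertex
    set t' : Fin (T + 1) := ⟨tstar, by omega⟩ with ht'
    set ystar : Fin T → ℝ :=
      (muVert T (∑ i, vProf T 1 (el i)) (∑ i, vProf T 1 (eu i)) t') ∘ (σ.symm : Equiv.Perm (Fin T)) with hystar
    have hymem : ystar ∈ Gen := ⟨t', σ.symm, rfl⟩
    have hφy : φ ystar = ∑ n ∈ range T, d n *
        (∑ i : Fin N, (if n < tstar then clamp (eu i - (n : ℕ))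
          else clamp (el i - (n : ℕ)))) := by
      rw [hφ ystar]
      rw [← Equiv.sum_comp σ (fun s => c s * ystar s)]
      rw [← Fin.sum_univ_eq_sum_range (fun n => d n * (∑ i : Fin N,
        (if n < tstar then clamp (eu i - (n : ℕ)) else clamp (el i - (n : ℕ))))) T]
      refine Finset.sum_congr rfl fun s _ => ?_
      have hsT : (s : ℕ) < T := s.isLt
      have hys : ystar (σ s) = ∑ i : Fin N,
          (if (s : ℕ) < tstar then clamp (eu i - ((s : ℕ) : ℝ))
            else clamp (el i - ((s : ℕ) : ℝ))) := by
        simp only [hystar, Function.comp_apply, Equiv.symm_apply_apply, muVert]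
        by_cases hcase : tstar ≤ (s : ℕ)
        · rw [if_pos (by simpa [ht'] using hcase), Finset.sum_apply]
          refine Finset.sum_congr rfl fun i _ => ?_
          rw [vProf_one, if_neg (by omega)]
        · rw [if_neg (by simpa [ht'] using hcase), Finset.sum_apply]
          refine Finset.sum_congr rfl fun i _ => ?_
          rw [vProf_one, if_pos (by omega)]
      simp only [hd]
      rw [hys, dif_pos hsT, Fin.eta]
    have h1 := hlt ystar (subset_convexHull ℝ Gen hymem)
    rw [hφy] at h1
    rw [← hφy] at hle1
    linarith
  · -- RHS ⊆ LHS
    refine convexHull_min ?_ (convex_finsetSum _ _ (fun i => convex_F T (el i) (eu i)))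
    rintro y ⟨t, π, rfl⟩
    set f : Fin N → (Fin T → ℝ) := fun i s =>
      if (t : ℕ) ≤ ((π s : Fin T) : ℕ) then vProf T 1 (el i) (π s)
      else vProf T 1 (eu i) (π s) with hf
    have hdecomp : (muVert T (∑ i, vProf T 1 (el i)) (∑ i, vProf T 1 (eu i)) t) ∘ π
        = ∑ i, f i := by
      funext s
      rw [Finset.sum_apply]
      show (if (t : ℕ) ≤ ((π s : Fin T) : ℕ) then (∑ i, vProf T 1 (el i)) (π s)
        else (∑ i, vProf T 1 (eu i)) (π s)) = _
      by_cases hcond : (t : ℕ) ≤ ((π s : Fin T) : ℕ)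
      · rw [if_pos hcond, Finset.sum_apply]
        exact Finset.sum_congr rfl fun i _ => by simp only [hf]; rw [if_pos hcond]
      · rw [if_neg hcond, Finset.sum_apply]
        exact Finset.sum_congr rfl fun i _ => by simp only [hf]; rw [if_neg hcond]
    rw [hdecomp]
    refine mem_finsetSum _ _ _ fun i _ => ?_
    constructor
    · intro s
      simp only [hf]
      split_ifs
      · rw [vProf_one]; exact ⟨clamp_nonneg _, clamp_le_one _⟩
      · rw [vProf_one]; exact ⟨clamp_nonneg _, clamp_le_one _⟩
    · -- sum bounds
      have hre : ∑ s, f i s = ∑ n ∈ range T,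
          (if (t : ℕ) ≤ n then clamp (el i - (n : ℕ)) else clamp (eu i - (n : ℕ))) := by
        have e1 : ∑ s, f i s = ∑ r : Fin T,
            (if (t : ℕ) ≤ (r : ℕ) then vProf T 1 (el i) r else vProf T 1 (eu i) r) :=
          Equiv.sum_comp π (fun r => if (t : ℕ) ≤ (r : ℕ) then vProf T 1 (el i) r
            else vProf T 1 (eu i) r)
        rw [e1, ← Fin.sum_univ_eq_sum_range (fun n =>
          if (t : ℕ) ≤ n then clamp (el i - (n : ℕ)) else clamp (eu i - (n : ℕ))) T]
        refine Finset.sum_congr rfl fun r _ => ?_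
        split_ifs with hcond
        · rw [vProf_one]
        · rw [vProf_one]
      have hsplit : ∀ n ∈ range T,
          (if (t : ℕ) ≤ n then clamp (el i - (n : ℕ)) else clamp (eu i - (n : ℕ)))
          = clamp (el i - (n : ℕ)) +
            (if n < (t : ℕ) then clamp (eu i - (n : ℕ)) - clamp (el i - (n : ℕ)) else 0) := by
        intro n _
        split_ifs with h1 h2 h2 <;> first | omega | ring
      rw [hre, Finset.sum_congr rfl hsplit, Finset.sum_add_distrib,
        sum_clamp (el i) (hel0 i), min_eq_right (helT i)]
      set D := ∑ n ∈ range T,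
        (if n < (t : ℕ) then clamp (eu i - (n : ℕ)) - clamp (el i - (n : ℕ)) else 0) with hD
      have hD0 : 0 ≤ D := by
        refine Finset.sum_nonneg fun n _ => ?_
        split_ifs
        · exact sub_nonneg.2 (clamp_mono (by linarith [hleu i]))
        · exact le_rfl
      have hD1 : D ≤ eu i - el i := by
        calc D ≤ ∑ n ∈ range T, (clamp (eu i - (n : ℕ)) - clamp (el i - (n : ℕ))) := by
              refine Finset.sum_le_sum fun n _ => ?_
              split_ifs
              · exact le_rfl
              · exact sub_nonneg.2 (clamp_mono (by linarith [hleu i]))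
          _ = eu i - el i := by
              rw [Finset.sum_sub_distrib, sum_clamp (eu i) (heu0 i),
                sum_clamp (el i) (hel0 i), min_eq_right (heuT i), min_eq_right (helT i)]
      constructor
      · linarith
      · linarith
end

section
/- Pointwise intersection characterization of robust aggregate flexibility: if L and U are two vector pairs with F(L) = F(ν_L_low, ν_L_up) and F(U) = F(ν_U_low, ν_U_up) such that for every admissible population Ξ in the ambiguity set, ν_L_low is majorized by ν_low(Ξ) with larger total and ν_U_up majorized by ν_up(Ξ) with smaller total, then ⋂_Ξ F(ν_low(Ξ), ν_up(Ξ)) ⊇ F(ν_L_low, ν_U_up); that is, F(ν_L_low, ν_U_up) is contained in every F(ν_low(Ξ), ν_up(Ξ)). -/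
open Finset

/-- The flexibility-type set determined by lower/upper profiles. -/
noncomputable def flexHull (T : ℕ) (νl νu : Fin T → ℝ) : Set (Fin T → ℝ) :=
  convexHull ℝ {y | ∃ (t : Fin (T + 1)) (π : Equiv.Perm (Fin T)),
    y = (muVert T νl νu t) ∘ π}


lemma pSum_mono_le {T : ℕ} {x x' : Fin T → ℝ} (h : x ≤ x') (k : ℕ) :
    pSum x k ≤ pSum x' k := by
  unfold pSum
  apply Finset.sum_le_sum
  intro i _
  split_ifs
  · exact h i
  · exact le_rfl

lemma pSum_total {T : ℕ} (x : Fin T → ℝ) : pSum x T = ∑ t, x t := by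
  unfold pSum
  apply Finset.sum_congr rfl
  intro i _
  exact if_pos i.isLt

lemma pSum_tail {T : ℕ} (x : Fin T → ℝ) (k : ℕ) :
    pSum x k + (∑ s : Fin T, if k ≤ (s : ℕ) then x s else 0) = ∑ s, x s := by
  unfold pSum
  rw [← Finset.sum_add_distrib]
  apply Finset.sum_congr rfl
  intro i _
  split_ifs with h1 h2 h2 <;> first | omega | ring

lemma pSum_combo {T : ℕ} (a b : ℝ) (p q : Fin T → ℝ) (k : ℕ) :
    pSum (a • p + b • q) k = a * pSum p k + b * pSum q k := by
  unfold pSum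
  rw [Finset.mul_sum, Finset.mul_sum, ← Finset.sum_add_distrib]
  apply Finset.sum_congr rfl
  intro i _
  split_ifs <;> simp

lemma abel_sum {T : ℕ} (d x : Fin T → ℝ) :
    ∑ i, d i * x i
      = ∑ k ∈ Finset.range T,
          ((if h : k < T then d ⟨k, h⟩ else 0) - (if h : k + 1 < T then d ⟨k + 1, h⟩ else 0))
            * pSum x (k + 1) := by
  set D : ℕ → ℝ := fun k => if h : k < T then d ⟨k, h⟩ else 0 with hD
  have key : ∀ i : Fin T, ∑ k ∈ Finset.Ico (i : ℕ) T, (D k - D (k + 1)) = d i := by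
    intro i
    rw [Finset.sum_Ico_eq_sum_range]
    have : ∀ k, D ((i : ℕ) + k) - D ((i : ℕ) + k + 1)
        = (fun j => D ((i : ℕ) + j)) k - (fun j => D ((i : ℕ) + j)) (k + 1) := by
      intro k; simp [add_assoc]
    simp_rw [this]
    rw [Finset.sum_range_sub' (fun j => D ((i : ℕ) + j)) (T - (i : ℕ))]
    have h1 : (i : ℕ) + (T - (i : ℕ)) = T := by omega
    have h2 : D ((i : ℕ) + (T - (i : ℕ))) = 0 := by
      rw [h1]; simp [hD]
    rw [h2, sub_zero]
    simp [hD, i.isLt]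
  calc ∑ i, d i * x i = ∑ i : Fin T, (∑ k ∈ Finset.Ico (i : ℕ) T, (D k - D (k + 1))) * x i := by
        apply Finset.sum_congr rfl; intro i _; rw [key i]
    _ = ∑ i : Fin T, ∑ k ∈ Finset.Ico (i : ℕ) T, (D k - D (k + 1)) * x i := by
        apply Finset.sum_congr rfl; intro i _; rw [Finset.sum_mul]
    _ = ∑ i : Fin T, ∑ k ∈ Finset.range T, if (i : ℕ) ≤ k then (D k - D (k + 1)) * x i else 0 := by
        apply Finset.sum_congr rfl; intro i _
        rw [← Finset.sum_filter]
        congr 1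
        ext k
        simp only [Finset.mem_Ico, Finset.mem_filter, Finset.mem_range]
        omega
    _ = ∑ k ∈ Finset.range T, ∑ i : Fin T, if (i : ℕ) ≤ k then (D k - D (k + 1)) * x i else 0 := by
        rw [Finset.sum_comm]
    _ = ∑ k ∈ Finset.range T, (D k - D (k + 1)) * pSum x (k + 1) := by
        apply Finset.sum_congr rfl; intro k _
        unfold pSum
        rw [Finset.mul_sum]
        apply Finset.sum_congr rfl; intro i _
        simp only [Nat.lt_succ_iff]
        split_ifs <;> ring

lemma hlp {T : ℕ} {y w : Fin T → ℝ} (hy : Antitone y) (hw : Antitone w)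
    (hk : ∀ k, k < T → pSum y k ≤ pSum w k) (htot : ∑ i, y i = ∑ i, w i) :
    y ∈ convexHull ℝ {z | ∃ π : Equiv.Perm (Fin T), z = w ∘ π} := by
  by_contra hmem
  set S : Set (Fin T → ℝ) := {z | ∃ π : Equiv.Perm (Fin T), z = w ∘ π} with hS
  have hSfin : S.Finite := by
    have : S = Set.range (fun π : Equiv.Perm (Fin T) => w ∘ π) := by
      ext z; simp [hS, eq_comm, Set.mem_setOf_eq]
    rw [this]; exact Set.finite_range _
  have hclosed : IsClosed (convexHull ℝ S) :=
    (Set.Finite.isCompact_convexHull (𝕜 := ℝ) hSfin).isClosed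
  obtain ⟨f, u, hfa, hfy⟩ :=
    geometric_hahn_banach_closed_point (convex_convexHull ℝ S) hclosed hmem
  set c : Fin T → ℝ := fun i => f (Pi.single i 1) with hc
  have hf : ∀ x : Fin T → ℝ, f x = ∑ i, c i * x i := by
    intro x
    conv_lhs => rw [← Finset.univ_sum_single x]
    rw [map_sum]
    apply Finset.sum_congr rfl
    intro i _
    have h1 : (Pi.single i (x i) : Fin T → ℝ) = x i • (Pi.single i (1 : ℝ) : Fin T → ℝ) := by
      rw [← Pi.single_smul, smul_eq_mul, mul_one]
    rw [h1, map_smul, smul_eq_mul, mul_comm]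
  set σ : Equiv.Perm (Fin T) := Tuple.sort (fun i => -c i) with hσ
  set d : Fin T → ℝ := c ∘ σ with hd
  have hdant : Antitone d := by
    intro i j hij
    have h2 := Tuple.monotone_sort (fun i => -c i) hij
    simpa [hd] using h2
  have hmono : Monovary d y := by
    intro i j hyij
    have hji : j ≤ i := by
      by_contra hcon
      exact absurd (hy (le_of_not_ge hcon)) (not_le.mpr hyij)
    exact hdant hji
  have r1 : ∑ i, d i * y (σ i) ≤ ∑ i, d i * y i := by
    have := hmono.sum_smul_comp_perm_le_sum_smul (σ := σ)
    simpa [smul_eq_mul] using this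
  have r2 : ∑ i, d i * y i ≤ ∑ i, d i * w i := by
    rw [abel_sum, abel_sum]
    apply Finset.sum_le_sum
    intro k hk'
    have hkT : k < T := Finset.mem_range.mp hk'
    rcases lt_or_ge (k + 1) T with hT | hT
    case inr =>
      have hTeq : k + 1 = T := by omega
      have hpy : pSum y (k + 1) = pSum w (k + 1) := by
        rw [hTeq, pSum_total, pSum_total, htot]
      rw [hpy]
    case inl =>
      have hc1 : (if h : k < T then d ⟨k, h⟩ else 0) = d ⟨k, hkT⟩ := dif_pos hkT
      have hc2 : (if h : k + 1 < T then d ⟨k + 1, h⟩ else 0) = d ⟨k + 1, hT⟩ := dif_pos hT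
      rw [hc1, hc2]
      have hcoef : 0 ≤ d ⟨k, hkT⟩ - d ⟨k + 1, hT⟩ := by
        have := hdant (show (⟨k, hkT⟩ : Fin T) ≤ ⟨k + 1, hT⟩ by
          simp [Fin.le_def])
        linarith
      exact mul_le_mul_of_nonneg_left (hk (k + 1) hT) hcoef
  have e1 : f y = ∑ i, d i * y (σ i) := by
    rw [hf y, ← Equiv.sum_comp σ (fun i => c i * y i)]
    simp [hd, Function.comp]
  have e2 : ∑ i, d i * w i = f (w ∘ ⇑σ⁻¹) := by
    rw [hf (w ∘ ⇑σ⁻¹), ← Equiv.sum_comp σ (fun i => c i * (w ∘ ⇑σ⁻¹) i)]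
    simp [hd, Function.comp]
  have hlt : f (w ∘ ⇑σ⁻¹) < u := hfa _ (subset_convexHull ℝ S ⟨σ⁻¹, rfl⟩)
  rw [e1] at hfy
  rw [e2] at r2
  linarith

lemma antitone_muVert {T : ℕ} {l u : Fin T → ℝ} (hl : Antitone l) (hu : Antitone u)
    (hlu : l ≤ u) (r : Fin (T + 1)) : Antitone (muVert T l u r) := by
  intro i j hij
  unfold muVert
  split_ifs with h1 h2 h2
  · exact hl hij
  · exact le_trans (hlu j) (hu hij)
  · exact absurd (le_trans h2 (by exact_mod_cast hij)) h1
  · exact hu hij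

lemma le_muVert {T : ℕ} {l u : Fin T → ℝ} (hlu : l ≤ u) (r : Fin (T + 1)) :
    l ≤ muVert T l u r := by
  intro s; unfold muVert; split_ifs
  · exact le_rfl
  · exact hlu s

lemma muVert_le {T : ℕ} {l u : Fin T → ℝ} (hlu : l ≤ u) (r : Fin (T + 1)) :
    muVert T l u r ≤ u := by
  intro s; unfold muVert; split_ifs
  · exact hlu s
  · exact le_rfl

lemma muVert_mono {T : ℕ} {l u : Fin T → ℝ} (hlu : l ≤ u) {r r' : Fin (T + 1)}
    (hrr : r ≤ r') : muVert T l u r ≤ muVert T l u r' := by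
  intro s; unfold muVert
  split_ifs with h1 h2 h2
  · exact le_rfl
  · exact hlu s
  · exact absurd (le_trans (by exact_mod_cast hrr) h2) h1
  · exact le_rfl

lemma pSum_muVert_up {T : ℕ} (l u : Fin T → ℝ) (r : Fin (T + 1)) {k : ℕ}
    (hkr : k ≤ (r : ℕ)) : pSum (muVert T l u r) k = pSum u k := by
  unfold pSum muVert
  apply Finset.sum_congr rfl
  intro s _
  split_ifs with h1 h2 <;> first | rfl | omega

lemma pSum_muVert_low {T : ℕ} (l u : Fin T → ℝ) (r : Fin (T + 1)) {k : ℕ}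
    (hrk : (r : ℕ) ≤ k) :
    pSum (muVert T l u r) k
      = (∑ s, muVert T l u r s) - ((∑ s, l s) - pSum l k) := by
  have h1 := pSum_tail (muVert T l u r) k
  have h2 := pSum_tail l k
  have h3 : (∑ s : Fin T, if k ≤ (s : ℕ) then muVert T l u r s else 0)
      = ∑ s : Fin T, if k ≤ (s : ℕ) then l s else 0 := by
    apply Finset.sum_congr rfl
    intro s _
    unfold muVert
    split_ifs with hh1 hh2 <;> first | rfl | omega
  linarith

theorem robust_flexSet_subset {ι : Type*} (T : ℕ)
    (νlow νup : ι → Fin T → ℝ)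
    (hlow : ∀ Ξ, Antitone (νlow Ξ)) (hup : ∀ Ξ, Antitone (νup Ξ))
    (hlu : ∀ Ξ, νlow Ξ ≤ νup Ξ)
    (νL νU : Fin T → ℝ) (hνL : Antitone νL) (hνU : Antitone νU) (hLU : νL ≤ νU)
    (hsumL : ∀ Ξ, ∑ t, νlow Ξ t ≤ ∑ t, νL t)
    (hsumU : ∀ Ξ, ∑ t, νU t ≤ ∑ t, νup Ξ t)
    (hmajL : ∀ Ξ, ∀ s ≤ T, pSum νL s ≤ pSum (νlow Ξ) s)
    (hmajU : ∀ Ξ, ∀ s ≤ T, pSum νU s ≤ pSum (νup Ξ) s) :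
    ∀ Ξ, flexHull T νL νU ⊆ flexHull T (νlow Ξ) (νup Ξ) := by
  intro Ξ
  rcases Nat.eq_zero_or_pos T with hT0 | hT0
  · subst hT0
    intro y _
    have hy : y = muVert 0 (νlow Ξ) (νup Ξ) 0 ∘ ⇑(1 : Equiv.Perm (Fin 0)) := by
      funext i; exact i.elim0
    exact subset_convexHull ℝ _ ⟨0, 1, hy⟩
  have hconv : Convex ℝ (flexHull T (νlow Ξ) (νup Ξ)) := convex_convexHull ℝ _
  have hμant : ∀ r, Antitone (muVert T (νlow Ξ) (νup Ξ) r) :=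
    fun r => antitone_muVert (hlow Ξ) (hup Ξ) (hlu Ξ) r
  -- each vertex of the source is in the target hull
  have key : ∀ t : Fin (T + 1),
      muVert T νL νU t ∈ flexHull T (νlow Ξ) (νup Ξ) := by
    intro t
    have hYant : Antitone (muVert T νL νU t) := antitone_muVert hνL hνU hLU t
    set St : ℝ := ∑ s, muVert T νL νU t s with hSt
    have hSfmono : ∀ {r r' : Fin (T + 1)}, r ≤ r' →
        ∑ s, muVert T (νlow Ξ) (νup Ξ) r s ≤ ∑ s, muVert T (νlow Ξ) (νup Ξ) r' s :=
      fun h => Finset.sum_le_sum (fun s _ => muVert_mono (hlu Ξ) h s)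
    have hlb : ∑ s, muVert T (νlow Ξ) (νup Ξ) 0 s ≤ St := by
      have h1 : ∑ s, muVert T (νlow Ξ) (νup Ξ) 0 s = ∑ s, νlow Ξ s := by
        apply Finset.sum_congr rfl; intro s _
        exact if_pos (Nat.zero_le _)
      have h2 : ∑ s, νL s ≤ St := Finset.sum_le_sum fun s _ => le_muVert hLU t s
      rw [h1]; exact le_trans (hsumL Ξ) h2
    have hub : St ≤ ∑ s, muVert T (νlow Ξ) (νup Ξ) (Fin.last T) s := by
      have h1 : ∑ s, muVert T (νlow Ξ) (νup Ξ) (Fin.last T) s = ∑ s, νup Ξ s := by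
        apply Finset.sum_congr rfl; intro s _
        exact if_neg (by rw [Fin.val_last]; exact not_le.mpr s.isLt)
      have h2 : St ≤ ∑ s, νU s := Finset.sum_le_sum fun s _ => muVert_le hLU t s
      rw [h1]; exact le_trans h2 (hsumU Ξ)
    -- find the consecutive pair a, a+1
    obtain ⟨a, hA, haLe, haGe⟩ :
        ∃ a : Fin (T + 1), ∃ hA : (a : ℕ) < T,
          (∑ s, muVert T (νlow Ξ) (νup Ξ) a s ≤ St) ∧
          St ≤ ∑ s, muVert T (νlow Ξ) (νup Ξ) ⟨(a : ℕ) + 1, Nat.succ_lt_succ hA⟩ s := by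
      classical
      have hBne : (Finset.univ.filter
          (fun r : Fin (T + 1) =>
            (∑ s, muVert T (νlow Ξ) (νup Ξ) r s ≤ St) ∧ (r : ℕ) < T)).Nonempty :=
        ⟨0, Finset.mem_filter.mpr ⟨Finset.mem_univ _, hlb, by simpa using hT0⟩⟩
      obtain ⟨-, haSt, haT⟩ := Finset.mem_filter.mp (Finset.max'_mem _ hBne)
      refine ⟨_, haT, haSt, ?_⟩
      by_cases hA' : (Finset.max' _ hBne : Fin (T + 1)).val + 1 < T
      · by_contra hcon
        push_neg at hcon
        have hmem' : (⟨(Finset.max' _ hBne : Fin (T + 1)).val + 1, by omega⟩ : Fin (T + 1))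
            ∈ Finset.univ.filter
              (fun r : Fin (T + 1) =>
                (∑ s, muVert T (νlow Ξ) (νup Ξ) r s ≤ St) ∧ (r : ℕ) < T) :=
          Finset.mem_filter.mpr ⟨Finset.mem_univ _, le_of_lt hcon, hA'⟩
        have hle' := Finset.le_max' _ _ hmem'
        have h2 : ((⟨(Finset.max' _ hBne : Fin (T + 1)).val + 1, by omega⟩ : Fin (T + 1)) : ℕ)
            = (Finset.max' _ hBne : Fin (T + 1)).val + 1 := rfl
        rw [Fin.le_def, h2] at hle'
        omega
      · have heq : (⟨(Finset.max' _ hBne : Fin (T + 1)).val + 1,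
            Nat.succ_lt_succ haT⟩ : Fin (T + 1)) = Fin.last T := by
          rw [Fin.ext_iff, Fin.val_last]
          show (Finset.max' _ hBne : Fin (T + 1)).val + 1 = T
          omega
        rw [heq]
        exact hub
    -- the convex weight
    set A : ℝ := ∑ s, muVert T (νlow Ξ) (νup Ξ) a s with hA1
    set a' : Fin (T + 1) := ⟨(a : ℕ) + 1, Nat.succ_lt_succ hA⟩ with ha'
    set A' : ℝ := ∑ s, muVert T (νlow Ξ) (νup Ξ) a' s with hA2
    have hle : A ≤ A' := hSfmono (by rw [Fin.le_def]; simp [ha'])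
    set lam : ℝ := if A' = A then 1 else (A' - St) / (A' - A) with hlam
    have hlam0 : 0 ≤ lam := by
      rw [hlam]; split_ifs with h
      · norm_num
      · have hpos : 0 < A' - A := by
          rcases lt_or_eq_of_le hle with h' | h'
          · linarith
          · exact absurd h'.symm h
        apply div_nonneg <;> linarith
    have hlam1 : lam ≤ 1 := by
      rw [hlam]; split_ifs with h
      · exact le_rfl
      · have hpos : 0 < A' - A := by
          rcases lt_or_eq_of_le hle with h' | h'
          · linarith
          · exact absurd h'.symm h
        rw [div_le_one hpos]; linarith
    have hcombo : lam * A + (1 - lam) * A' = St := by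
      rw [hlam]; split_ifs with h
      · rw [h] at haGe ⊢; ring_nf; linarith
      · have hpos : 0 < A' - A := by
          rcases lt_or_eq_of_le hle with h' | h'
          · linarith
          · exact absurd h'.symm h
        field_simp
        ring
    set w : Fin T → ℝ := lam • muVert T (νlow Ξ) (νup Ξ) a
      + (1 - lam) • muVert T (νlow Ξ) (νup Ξ) a' with hw
    have hwant : Antitone w := by
      intro i j hij
      have h1 := hμant a hij
      have h2 := hμant a' hij
      simp only [hw, Pi.add_apply, Pi.smul_apply, smul_eq_mul]
      nlinarith
    have hwtot : ∑ i, w i = St := by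
      have h1 : ∑ i, w i = lam * A + (1 - lam) * A' := by
        rw [hw]
        simp only [Pi.add_apply, Pi.smul_apply, smul_eq_mul]
        rw [Finset.sum_add_distrib, ← Finset.mul_sum, ← Finset.mul_sum, hA1, hA2]
      rw [h1, hcombo]
    have hwps : ∀ k, k < T → pSum (muVert T νL νU t) k ≤ pSum w k := by
      intro k hkT
      have hcps : pSum w k = lam * pSum (muVert T (νlow Ξ) (νup Ξ) a) k
          + (1 - lam) * pSum (muVert T (νlow Ξ) (νup Ξ) a') k := by
        rw [hw]; exact pSum_combo _ _ _ _ _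
      rcases le_or_gt k (a : ℕ) with hka | hka
      · have e1 : pSum (muVert T (νlow Ξ) (νup Ξ) a) k = pSum (νup Ξ) k :=
          pSum_muVert_up _ _ _ hka
        have e2 : pSum (muVert T (νlow Ξ) (νup Ξ) a') k = pSum (νup Ξ) k :=
          pSum_muVert_up _ _ _ (by simp only [ha']; omega)
        have hYU : pSum (muVert T νL νU t) k ≤ pSum νU k :=
          pSum_mono_le (muVert_le hLU t) k
        have h6 := hmajU Ξ k (by omega)
        rw [hcps, e1, e2]
        nlinarith
      · have hak : (a : ℕ) ≤ k := by omega
        have ha'k : (a' : ℕ) ≤ k := by simp only [ha']; omega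
        have e1 := pSum_muVert_low (νlow Ξ) (νup Ξ) a hak
        have e2 := pSum_muVert_low (νlow Ξ) (νup Ξ) a' ha'k
        rw [← hA1] at e1
        rw [← hA2] at e2
        have htail := pSum_tail (muVert T νL νU t) k
        have htailL := pSum_tail νL k
        have htY : (∑ s : Fin T, if k ≤ (s : ℕ) then νL s else 0)
            ≤ (∑ s : Fin T, if k ≤ (s : ℕ) then muVert T νL νU t s else 0) := by
          apply Finset.sum_le_sum; intro s _; split_ifs
          · exact le_muVert hLU t s
          · exact le_rfl
        have h5 := hsumL Ξ
        have h6 := hmajL Ξ k (by omega)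
        rw [hcps, e1, e2]
        rw [← hSt] at htail
        nlinarith
    have hmaj : muVert T νL νU t ∈
        convexHull ℝ {z | ∃ π : Equiv.Perm (Fin T), z = w ∘ ⇑π} :=
      hlp hYant hwant hwps (by rw [hwtot])
    have hgen : {z | ∃ π : Equiv.Perm (Fin T), z = w ∘ ⇑π}
        ⊆ flexHull T (νlow Ξ) (νup Ξ) := by
      rintro z ⟨π, rfl⟩
      have hg1 : muVert T (νlow Ξ) (νup Ξ) a ∘ ⇑π ∈ flexHull T (νlow Ξ) (νup Ξ) :=
        subset_convexHull ℝ _ ⟨a, π, rfl⟩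
      have hg2 : muVert T (νlow Ξ) (νup Ξ) a' ∘ ⇑π ∈ flexHull T (νlow Ξ) (νup Ξ) :=
        subset_convexHull ℝ _ ⟨a', π, rfl⟩
      have hcomp : w ∘ ⇑π = lam • (muVert T (νlow Ξ) (νup Ξ) a ∘ ⇑π)
          + (1 - lam) • (muVert T (νlow Ξ) (νup Ξ) a' ∘ ⇑π) := by
        funext i; simp [hw]
      rw [hcomp]
      exact hconv hg1 hg2 hlam0 (by linarith) (by ring)
    exact convexHull_min hgen hconv hmaj
  -- conclude via permutation invariance
  apply convexHull_min ?_ hconv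
  rintro z ⟨t, π, rfl⟩
  have hpre : Convex ℝ ((LinearMap.funLeft ℝ ℝ ⇑π) ⁻¹' flexHull T (νlow Ξ) (νup Ξ)) :=
    hconv.linear_preimage _
  have hsub : {y | ∃ (r : Fin (T + 1)) (π' : Equiv.Perm (Fin T)),
        y = muVert T (νlow Ξ) (νup Ξ) r ∘ ⇑π'}
      ⊆ (LinearMap.funLeft ℝ ℝ ⇑π) ⁻¹' flexHull T (νlow Ξ) (νup Ξ) := by
    rintro z' ⟨r, π', rfl⟩
    show (LinearMap.funLeft ℝ ℝ ⇑π) (muVert T (νlow Ξ) (νup Ξ) r ∘ ⇑π')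
      ∈ flexHull T (νlow Ξ) (νup Ξ)
    have hcomp : (LinearMap.funLeft ℝ ℝ ⇑π) (muVert T (νlow Ξ) (νup Ξ) r ∘ ⇑π')
        = muVert T (νlow Ξ) (νup Ξ) r ∘ ⇑(π.trans π') := by
      funext i; rfl
    rw [hcomp]
    exact subset_convexHull ℝ _ ⟨r, π.trans π', rfl⟩
  have hmem := convexHull_min hsub hpre (key t)
  exact hmem
end
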